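/- arXiv:1612.07041 — 6 statements merged into one kernel-verified Lean document; each statement's English description precedes it below -/
import Mathlib

section
/- For all integers p ≥ 1, q ≥ 0, k ≥ 1 and every real number t: Σ_{j_1,…,j_{p+1} ≥ 0} (1/k)·C(k, j_1+1)·C(k, j_2)···C(k, j_{p+1})·C(qk, j_1+⋯+j_{p+1} − pk)·t^{j_{p+1}} = Σ_{j=1}^{k} (1/k)·C((p+q)k, j−1)·C(k, j)·t^{j}. -/
open Finset
open scoped Classical

/-- `P` is a set partition of `{1,…,n}` (modelled on `Fin n`): a collection of nonempty
blocks such that every element belongs to exactly one block. -/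
def IsPartitionOf (n : ℕ) (P : Finset (Finset (Fin n))) : Prop :=
  (∀ B ∈ P, B.Nonempty) ∧ ∀ s : Fin n, ∃! B, B ∈ P ∧ s ∈ B

/-- `a` and `b` lie in a common block of `P`. -/
def SameBlock {n : ℕ} (P : Finset (Finset (Fin n))) (a b : Fin n) : Prop :=
  ∃ B ∈ P, a ∈ B ∧ b ∈ B

/-- A partition is noncrossing if there are no `a < b < c < d` with `a, c` in one block
and `b, d` in another, distinct block. -/
def IsNoncrossing {n : ℕ} (P : Finset (Finset (Fin n))) : Prop :=
  ∀ a b c d : Fin n, a < b → b < c → c < d →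
    SameBlock P a c → SameBlock P b d → SameBlock P a b

/-- A perfect matching (pair partition): a partition all of whose blocks have two elements. -/
def IsPairPartition (n : ℕ) (P : Finset (Finset (Fin n))) : Prop :=
  IsPartitionOf n P ∧ ∀ B ∈ P, B.card = 2

/-- The block of `P` containing `s`. -/
noncomputable def theBlock {n : ℕ} (P : Finset (Finset (Fin n))) (s : Fin n) :
    Finset (Fin n) :=
  univ.filter (fun t => SameBlock P s t)

/-- The cycle permutation `σ_π` of a partition: on a block `{s₁ < s₂ < … < s_m}` it sends
`s_i` to `s_{i+1}` for `i < m` and sends `s_m` back to `s₁`. -/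
noncomputable def cyclePerm {n : ℕ} (P : Finset (Finset (Fin n))) (s : Fin n) : Fin n :=
  if h : ((theBlock P s).filter (fun t => s < t)).Nonempty then
    ((theBlock P s).filter (fun t => s < t)).min' h
  else if h' : (theBlock P s).Nonempty then (theBlock P s).min' h' else s

/-- The 1-based value of `s : Fin n`, i.e. the corresponding element of `{1,…,n}`. -/
def val1 {n : ℕ} (s : Fin n) : ℕ := s.val + 1

/-- The residue in `{1,…,m}` of the (1-based) element corresponding to `s : Fin n`. -/
def res {n : ℕ} (s : Fin n) (m : ℕ) : ℕ := s.val % m + 1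

/-- The map `α`, sending a partition `π` of `{1,…,n}` to the collection of pairs
`{2s, 2σ_π(s) − 1}`, `s ∈ {1,…,n}` (in 0-based indexing, `2s ↦ 2s+1` and
`2σ_π(s)−1 ↦ 2⬝(σ_π(s))`). -/
noncomputable def alphaMap {n : ℕ} (P : Finset (Finset (Fin n))) :
    Finset (Finset (Fin (2*n))) :=
  (univ : Finset (Fin n)).image fun s =>
    ({⟨2 * s.val + 1, by have := s.isLt; omega⟩,
      ⟨2 * (cyclePerm P s).val, by have := (cyclePerm P s).isLt; omega⟩} :
      Finset (Fin (2*n)))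

/-- Substitution `Σ_{i≥0} t_i g^i` of a power series with zero constant term into the
series with coefficient sequence `t`; the `m`-th coefficient only involves `i ≤ m`. -/
noncomputable def substSeries (t : ℕ → ℝ) (g : PowerSeries ℝ) : PowerSeries ℝ :=
  PowerSeries.mk fun m =>
    ∑ i ∈ Finset.range (m+1), t i * (PowerSeries.coeff m) (g ^ i)

/-- The even part `Σ a_{2n} z^{2n}` of a formal power series `Σ a_n z^n`. -/
noncomputable def evenPart (f : PowerSeries ℝ) : PowerSeries ℝ :=
  PowerSeries.mk fun n => if Even n then PowerSeries.coeff n f else 0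

def chAux (M : ℕ) (z : ℤ) : ℕ := if 0 ≤ z then M.choose z.toNat else 0

lemma chAux_coe (M n : ℕ) : chAux M (n : ℤ) = M.choose n := by simp [chAux]

lemma chAux_neg {M : ℕ} {z : ℤ} (h : z < 0) : chAux M z = 0 := by
  simp [chAux, not_le.2 h]

lemma chAux_eq_zero_of_lt {M : ℕ} {z : ℤ} (h : (M : ℤ) < z) : chAux M z = 0 := by
  unfold chAux
  split
  · exact Nat.choose_eq_zero_of_lt (by omega)
  · rfl

lemma vandNat (k M N : ℕ) :
    ∑ i ∈ Finset.range (N+1), k.choose i * M.choose (N - i) = (k+M).choose N := by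
  rw [Nat.add_choose_eq, Finset.Nat.sum_antidiagonal_eq_sum_range_succ
    (fun i j => k.choose i * M.choose j)]

lemma vandZ (k M : ℕ) (N : ℤ) :
    ∑ x ∈ Finset.range (k+1), k.choose x * chAux M (N - x) = chAux (k+M) N := by
  rcases lt_or_ge N 0 with hN | hN
  · rw [chAux_neg hN]
    refine Finset.sum_eq_zero fun x _ => ?_
    rw [chAux_neg (by omega), mul_zero]
  · lift N to ℕ using hN
    rw [chAux_coe, ← vandNat]
    have h1 : ∑ x ∈ Finset.range (k+1), k.choose x * chAux M ((N : ℤ) - x)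
        = ∑ x ∈ Finset.range (k+N+1), k.choose x * chAux M ((N : ℤ) - x) := by
      refine Finset.sum_subset (Finset.range_subset_range.2 (by omega)) fun x _ hx => ?_
      simp only [Finset.mem_range, not_lt] at hx
      rw [Nat.choose_eq_zero_of_lt (by omega), zero_mul]
    have h2 : ∑ i ∈ Finset.range (N+1), k.choose i * M.choose (N - i)
        = ∑ x ∈ Finset.range (N+1), k.choose x * chAux M ((N : ℤ) - x) := by
      refine Finset.sum_congr rfl fun i hi => ?_
      simp only [Finset.mem_range] at hi
      congr 1
      rw [show (N : ℤ) - i = ((N - i : ℕ) : ℤ) by omega, chAux_coe]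
    have h3 : ∑ x ∈ Finset.range (N+1), k.choose x * chAux M ((N : ℤ) - x)
        = ∑ x ∈ Finset.range (k+N+1), k.choose x * chAux M ((N : ℤ) - x) := by
      refine Finset.sum_subset (Finset.range_subset_range.2 (by omega)) fun x _ hx => ?_
      simp only [Finset.mem_range, not_lt] at hx
      rw [chAux_neg (by omega), mul_zero]
    rw [h1, h2, h3]

lemma multiV (k M : ℕ) : ∀ (a : ℕ) (N : ℤ),
    ∑ j : Fin a → Fin (k+1), (∏ i, k.choose (j i).val) * chAux M (N - ∑ i, ((j i : ℕ) : ℤ))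
      = chAux (a*k + M) N := by
  intro a
  induction a with
  | zero => intro N; simp
  | succ a ih =>
    intro N
    rw [← (Fin.consEquiv (fun _ : Fin (a+1) => Fin (k+1))).sum_comp]
    rw [Fintype.sum_prod_type]
    have hstep : ∀ y : Fin (k+1),
        ∑ g : Fin a → Fin (k+1),
          (∏ i, k.choose (((Fin.consEquiv (fun _ => Fin (k+1))) (y, g)) i).val) *
            chAux M (N - ∑ i, ((((Fin.consEquiv (fun _ => Fin (k+1))) (y, g)) i : ℕ) : ℤ))
        = k.choose y.val * chAux (a*k + M) (N - y.val) := by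
      intro y
      rw [← ih (N - y.val), Finset.mul_sum]
      refine Finset.sum_congr rfl fun g _ => ?_
      have hprod : (∏ i, k.choose (((Fin.consEquiv (fun _ : Fin (a+1) => Fin (k+1))) (y, g)) i).val)
          = k.choose y.val * ∏ i, k.choose ((g i).val) := by
        simp [Fin.consEquiv, Fin.prod_univ_succ]
      have hsum : (∑ i, ((((Fin.consEquiv (fun _ : Fin (a+1) => Fin (k+1))) (y, g)) i : ℕ) : ℤ))
          = (y.val : ℤ) + ∑ i, ((g i : ℕ) : ℤ) := by
        simp [Fin.consEquiv, Fin.sum_univ_succ]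
      rw [hprod, hsum, mul_assoc]
      congr 2
      ring_nf
    rw [Finset.sum_congr rfl fun y _ => hstep y]
    rw [show ∑ y : Fin (k+1), k.choose y.val * chAux (a*k+M) (N - y.val)
        = ∑ x ∈ Finset.range (k+1), k.choose x * chAux (a*k+M) (N - x) from
      (Finset.sum_range fun x => k.choose x * chAux (a*k+M) (N - x)).symm]
    rw [vandZ, show (a+1)*k + M = k + (a*k + M) by ring]

lemma shiftVand (k M : ℕ) (N : ℤ) (hN : (M:ℤ) < N + 1) :
    ∑ y ∈ Finset.range (k+1), k.choose (y+1) * chAux M (N - y) = chAux (k + M) (N + 1) := by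
  rw [← vandZ k M (N+1), Finset.sum_range_succ' (fun x => k.choose x * chAux M (N + 1 - x)),
    Finset.sum_range_succ (fun y => k.choose (y+1) * chAux M (N - y))]
  rw [Nat.choose_eq_zero_of_lt (by omega), zero_mul, add_zero]
  simp only [Nat.cast_zero, sub_zero, Nat.choose_zero_right, one_mul,
    chAux_eq_zero_of_lt hN, add_zero, mul_zero]
  refine Finset.sum_congr rfl fun y _ => ?_
  congr 2
  push_cast; ring

lemma ifchAux (P Q S : ℕ) :
    (if P ≤ S then Q.choose (S - P) else 0) = chAux Q ((P : ℤ) + Q - S) := by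
  rcases le_or_gt P S with h | h
  · rw [if_pos h]
    rcases le_or_gt S (P + Q) with h2 | h2
    · unfold chAux
      rw [if_pos (by omega), show ((P:ℤ) + Q - S).toNat = Q - (S - P) by omega]
      exact (Nat.choose_symm (by omega)).symm
    · rw [Nat.choose_eq_zero_of_lt (by omega), chAux_neg (by omega)]
  · rw [if_neg (by omega), chAux_eq_zero_of_lt (by omega)]

lemma prod_erase_zero {M : Type*} [CommMonoid M] (n : ℕ) (f : Fin (n+1) → M) :
    ∏ i ∈ (univ : Finset (Fin (n+1))).erase 0, f i = ∏ i : Fin n, f i.succ := by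
  have himg : (univ : Finset (Fin (n+1))).erase 0 = Finset.image Fin.succ univ := by
    ext i
    simp only [Finset.mem_erase, Finset.mem_univ, and_true, Finset.mem_image, true_and]
    exact (Fin.exists_succ_eq (x := i)).symm
  rw [himg, Finset.prod_image (fun a _ b _ h => Fin.succ_injective _ h)]

lemma innerNat (p' q k x : ℕ) (hx : x ≤ k) :
    ∑ y : Fin (k+1), ∑ m : Fin p' → Fin (k+1),
      k.choose (y.val+1) * ((∏ i, k.choose (m i).val) *
        chAux (q*k) ((((p'+1)*k : ℕ) : ℤ) + ((q*k : ℕ) : ℤ) - ((y.val : ℤ) + ((∑ i, ((m i).val:ℤ)) + x))))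
    = chAux ((p'+1+q)*k) ((((p'+1)*k : ℕ):ℤ) + ((q*k:ℕ):ℤ) + 1 - x) := by
  have hy : ∀ y : Fin (k+1),
      ∑ m : Fin p' → Fin (k+1),
        k.choose (y.val+1) * ((∏ i, k.choose (m i).val) *
          chAux (q*k) ((((p'+1)*k : ℕ) : ℤ) + ((q*k : ℕ) : ℤ) - ((y.val : ℤ) + ((∑ i, ((m i).val:ℤ)) + x))))
      = k.choose (y.val+1) * chAux (p'*k + q*k) (((((p'+1)*k : ℕ):ℤ) + ((q*k:ℕ):ℤ) - x) - y.val) := by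
    intro y
    rw [← multiV (k) (q*k) p' (((((p'+1)*k : ℕ):ℤ) + ((q*k:ℕ):ℤ) - x) - y.val), Finset.mul_sum]
    refine Finset.sum_congr rfl fun m _ => ?_
    congr 2
    push_cast
    ring
  rw [Finset.sum_congr rfl fun y _ => hy y]
  rw [show (∑ y : Fin (k+1), k.choose (y.val+1) *
        chAux (p'*k + q*k) (((((p'+1)*k : ℕ):ℤ) + ((q*k:ℕ):ℤ) - x) - y.val))
      = ∑ y ∈ Finset.range (k+1), k.choose (y+1) *
        chAux (p'*k + q*k) (((((p'+1)*k : ℕ):ℤ) + ((q*k:ℕ):ℤ) - x) - y) from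
    (Finset.sum_range fun y => k.choose (y+1) *
        chAux (p'*k + q*k) (((((p'+1)*k : ℕ):ℤ) + ((q*k:ℕ):ℤ) - x) - y)).symm]
  rw [shiftVand k (p'*k + q*k) _ (by push_cast; nlinarith [Nat.zero_le (q*k)])]
  congr 1
  · ring
  · push_cast; ring

lemma ifchAuxReal (P Q S : ℕ) :
    (if P ≤ S then (Q.choose (S - P) : ℝ) else 0) = (chAux Q ((P:ℤ) + Q - S) : ℝ) := by
  rw [← ifchAux]; split <;> simp

noncomputable def Bfun (p' q k : ℕ) (t : ℝ) (j : Fin (p'+1+1) → ℕ) : ℝ :=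
  (1/(k:ℝ)) * t ^ (j (Fin.last (p'+1))) *
      ((k.choose (j 0 + 1) * ((∏ i ∈ (univ : Finset (Fin (p'+1+1))).erase 0, k.choose (j i)) *
        chAux (q*k) ((((p'+1)*k : ℕ):ℤ) + ((q*k:ℕ):ℤ) - ∑ i, ((j i : ℤ))))) : ℝ)

lemma bodyEq (p' q k : ℕ) (t : ℝ) (j : Fin (p'+1+1) → ℕ) :
    (1 / (k : ℝ)) * (Nat.choose k (j 0 + 1) : ℝ) *
      (∏ i ∈ Finset.univ.erase (0 : Fin (p'+1+1)), (Nat.choose k (j i) : ℝ)) *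
      (if (p'+1)*k ≤ ∑ i, j i then (Nat.choose (q*k) ((∑ i, j i) - (p'+1)*k) : ℝ) else 0) *
      t ^ (j (Fin.last (p'+1)))
    = Bfun p' q k t j := by
  unfold Bfun
  rw [ifchAuxReal]
  push_cast
  ring

/-- Example 6.1. For all `p ≥ 1`, `q ≥ 0`, `k ≥ 1` and real `t`:
`Σ_{j₁,…,j_{p+1} ≥ 0} (1/k)·C(k,j₁+1)·C(k,j₂)⋯C(k,j_{p+1})·C(qk, |j|−pk)·t^{j_{p+1}}
 = Σ_{j=1}^k (1/k)·C((p+q)k, j−1)·C(k,j)·t^j`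
(with the convention `C(n,m) = 0` unless `0 ≤ m ≤ n`; only finitely many terms on the
left are nonzero). -/
theorem statement6 (p q k : ℕ) (hp : 1 ≤ p) (hk : 1 ≤ k) (t : ℝ) :
    (∑ᶠ j : Fin (p+1) → ℕ,
      (1 / (k : ℝ)) * (Nat.choose k (j 0 + 1) : ℝ) *
        (∏ i ∈ Finset.univ.erase (0 : Fin (p+1)), (Nat.choose k (j i) : ℝ)) *
        (if p*k ≤ ∑ i, j i then (Nat.choose (q*k) ((∑ i, j i) - p*k) : ℝ) else 0) *
        t ^ (j (Fin.last p))) =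
    ∑ j ∈ Finset.Icc 1 k,
      (1 / (k : ℝ)) * (Nat.choose ((p+q)*k) (j-1) : ℝ) * (Nat.choose k j : ℝ) * t ^ j := by
  obtain ⟨p', rfl⟩ : ∃ p', p = p' + 1 := ⟨p - 1, by omega⟩
  have hsupp : Function.support (fun j : Fin (p'+1+1) → ℕ =>
      (1 / (k : ℝ)) * (Nat.choose k (j 0 + 1) : ℝ) *
        (∏ i ∈ Finset.univ.erase (0 : Fin (p'+1+1)), (Nat.choose k (j i) : ℝ)) *
        (if (p'+1)*k ≤ ∑ i, j i then (Nat.choose (q*k) ((∑ i, j i) - (p'+1)*k) : ℝ) else 0) *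
        t ^ (j (Fin.last (p'+1)))) ⊆
      ↑(Fintype.piFinset fun _ : Fin (p'+1+1) => Finset.range (k+1)) := by
    intro j hj
    simp only [Function.mem_support] at hj
    by_contra hmem
    apply hj
    simp only [Finset.mem_coe, Fintype.mem_piFinset, Finset.mem_range, not_forall, not_lt] at hmem
    obtain ⟨i, hi⟩ := hmem
    rcases eq_or_ne i 0 with rfl | hi0
    · rw [Nat.choose_eq_zero_of_lt (show k < j 0 + 1 by omega)]
      simp
    · rw [Finset.prod_eq_zero (Finset.mem_erase.2 ⟨hi0, Finset.mem_univ i⟩)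
        (by rw [Nat.choose_eq_zero_of_lt (show k < j i by omega)]; simp)]
      simp
  rw [finsum_eq_sum_of_support_subset _ hsupp]
  rw [Finset.sum_congr rfl fun j _ => bodyEq p' q k t j]
  have hnbij : ∑ j ∈ Fintype.piFinset (fun _ : Fin (p'+1+1) => Finset.range (k+1)),
      Bfun p' q k t j = ∑ g : Fin (p'+1+1) → Fin (k+1), Bfun p' q k t (fun a => (g a : ℕ)) := by
    refine Finset.sum_nbij' (fun j a => (⟨min (j a) k, by omega⟩ : Fin (k+1)))
      (fun g a => (g a : ℕ)) (fun j _ => Finset.mem_univ _) ?_ ?_ ?_ ?_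
    · intro g _
      simp only [Fintype.mem_piFinset, Finset.mem_range]
      exact fun a => (g a).isLt
    · intro j hj
      simp only [Fintype.mem_piFinset, Finset.mem_range] at hj
      funext a
      have := hj a
      simp only
      omega
    · intro g _
      funext a
      ext
      simp only
      omega
    · intro j hj
      simp only [Fintype.mem_piFinset, Finset.mem_range] at hj
      congr 1
      funext a
      have := hj a
      simp only
      omega
  rw [hnbij]
  have hequiv : ∑ g : Fin (p'+1+1) → Fin (k+1), Bfun p' q k t (fun a => (g a : ℕ))
      = ∑ x : Fin (k+1), (1/(k:ℝ)) * t ^ x.val * (k.choose x.val : ℝ) *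
        ((chAux ((p'+1+q)*k) ((((p'+1)*k : ℕ):ℤ) + ((q*k:ℕ):ℤ) + 1 - x.val)) : ℝ) := by
    rw [← Equiv.sum_comp (Fin.consEquiv fun _ : Fin (p'+1+1) => Fin (k+1)) _,
      Fintype.sum_prod_type]
    have step1 : ∀ (y : Fin (k+1)) (h : Fin (p'+1) → Fin (k+1)),
        Bfun p' q k t (fun a => ((Fin.consEquiv fun _ : Fin (p'+1+1) => Fin (k+1)) (y, h) a : ℕ))
        = (1/(k:ℝ)) * t ^ ((h (Fin.last p')).val) *
          ((k.choose (y.val + 1) * ((∏ i, k.choose ((h i).val)) *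
            chAux (q*k) ((((p'+1)*k : ℕ):ℤ) + ((q*k:ℕ):ℤ) -
              ((y.val:ℤ) + ∑ i, ((h i).val : ℤ)))) : ℕ) : ℝ) := by
      intro y h
      unfold Bfun
      simp only [Fin.consEquiv, Equiv.coe_fn_mk, Fin.cons_zero, Fin.cons_succ,
        prod_erase_zero, Fin.sum_univ_succ, ← Fin.succ_last]
      push_cast
      ring
    rw [Finset.sum_congr rfl fun y _ => Finset.sum_congr rfl fun h _ => step1 y h]
    have step2 : ∀ y : Fin (k+1),
        (∑ h : Fin (p'+1) → Fin (k+1), (1/(k:ℝ)) * t ^ ((h (Fin.last p')).val) *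
          ((k.choose (y.val + 1) * ((∏ i, k.choose ((h i).val)) *
            chAux (q*k) ((((p'+1)*k : ℕ):ℤ) + ((q*k:ℕ):ℤ) -
              ((y.val:ℤ) + ∑ i, ((h i).val : ℤ)))) : ℕ) : ℝ))
        = ∑ x : Fin (k+1), ∑ m : Fin p' → Fin (k+1),
            (1/(k:ℝ)) * t ^ x.val * (k.choose x.val : ℝ) *
            ((k.choose (y.val+1) * ((∏ i, k.choose ((m i).val)) *
              chAux (q*k) ((((p'+1)*k : ℕ) : ℤ) + ((q*k : ℕ) : ℤ) -
                ((y.val : ℤ) + ((∑ i, ((m i).val:ℤ)) + x.val)))) : ℕ) : ℝ) := by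
      intro y
      rw [← Equiv.sum_comp (Fin.snocEquiv fun _ : Fin (p'+1) => Fin (k+1)) _,
        Fintype.sum_prod_type]
      refine Finset.sum_congr rfl fun x _ => Finset.sum_congr rfl fun m _ => ?_
      simp only [Fin.snocEquiv, Equiv.coe_fn_mk, Fin.snoc_last, Fin.snoc_castSucc,
        Fin.prod_univ_castSucc, Fin.sum_univ_castSucc]
      push_cast
      ring
    rw [Finset.sum_congr rfl fun y _ => step2 y]
    rw [Finset.sum_comm]
    refine Finset.sum_congr rfl fun x _ => ?_
    have hcollect : ∑ y : Fin (k+1), ∑ m : Fin p' → Fin (k+1),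
        (1/(k:ℝ)) * t ^ x.val * (k.choose x.val : ℝ) *
        ((k.choose (y.val+1) * ((∏ i, k.choose ((m i).val)) *
          chAux (q*k) ((((p'+1)*k : ℕ) : ℤ) + ((q*k : ℕ) : ℤ) -
            ((y.val : ℤ) + ((∑ i, ((m i).val:ℤ)) + x.val)))) : ℕ) : ℝ)
        = (1/(k:ℝ)) * t ^ x.val * (k.choose x.val : ℝ) *
          ((∑ y : Fin (k+1), ∑ m : Fin p' → Fin (k+1),
            k.choose (y.val+1) * ((∏ i, k.choose ((m i).val)) *
              chAux (q*k) ((((p'+1)*k : ℕ) : ℤ) + ((q*k : ℕ) : ℤ) -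
                ((y.val : ℤ) + ((∑ i, ((m i).val:ℤ)) + x.val)))) : ℕ) : ℝ) := by
      push_cast
      rw [Finset.mul_sum]
      refine Finset.sum_congr rfl fun y _ => ?_
      rw [Finset.mul_sum]
    rw [hcollect, innerNat p' q k x.val (by omega)]
  rw [hequiv]
  have hT : (p'+1+q)*k = (p'+1)*k + q*k := by ring
  have hk2 : k ≤ (p'+1)*k := Nat.le_mul_of_pos_left k (Nat.succ_pos p')
  rw [hT]
  obtain ⟨P, hP⟩ : ∃ P, (p'+1)*k = P := ⟨_, rfl⟩
  obtain ⟨Q, hQ⟩ : ∃ Q, q*k = Q := ⟨_, rfl⟩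
  rw [hP] at hk2
  rw [hP, hQ]
  rw [← Finset.sum_range (fun x => (1/(k:ℝ)) * t ^ x * (k.choose x : ℝ) *
    ((chAux (P+Q) (((P : ℕ):ℤ) + ((Q:ℕ):ℤ) + 1 - x)) : ℝ))]
  rw [show Finset.range (k+1) = insert 0 (Finset.Icc 1 k) by ext a; simp; omega]
  rw [Finset.sum_insert (by simp)]
  rw [chAux_eq_zero_of_lt (by push_cast; omega)]
  simp only [Nat.cast_zero, mul_zero, zero_add]
  refine Finset.sum_congr rfl fun j hj => ?_
  simp only [Finset.mem_Icc] at hj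
  rw [show chAux (P+Q) (((P:ℕ):ℤ) + ((Q:ℕ):ℤ) + 1 - j)
      = (P+Q).choose (j-1) from ?_]
  · ring
  · unfold chAux
    rw [if_pos (by omega)]
    rw [show ((((P:ℕ):ℤ) + ((Q:ℕ):ℤ) + 1 - j)).toNat = (P+Q) - (j-1) by omega]
    exact Nat.choose_symm (by omega)
end

section
/- For all integers p ≥ 1, q ≥ 0, k ≥ 1 and every real number t: Σ_{j_1,…,j_{p+1} ≥ 0} (1/k)·C(k, j_1+1)·C(k, j_2)···C(k, j_{p+1})·C(qk, j_1+⋯+j_{p+1} − pk)·t^{j_1+⋯+j_{p+1}} = Σ_{j=1}^{k} (1/k)·C((p+1)k, j−1)·C(qk, k−j)·t^{(p+1)k−j}. -/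
open Finset
open scoped Classical

section StatementSevenHelpers
open Polynomial

private lemma hpow (k : ℕ) :
    ((X + 1 : ℝ[X]) ^ k) = ∑ j ∈ Finset.range (k+1), Polynomial.C (k.choose j : ℝ) * X ^ j := by
  ext n
  simp only [coeff_X_add_one_pow, Polynomial.finset_sum_coeff, Polynomial.coeff_C_mul,
    Polynomial.coeff_X_pow, mul_ite, mul_one, mul_zero, Finset.sum_ite_eq,
    Finset.mem_range, Nat.lt_succ_iff]
  split
  · rfl
  · next h => rw [Nat.choose_eq_zero_of_lt (by omega)]; simp

private lemma keyPoly (p k : ℕ) :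
    (∑ j ∈ Fintype.piFinset (fun _ : Fin (p+1) => Finset.range (k+1)),
      Polynomial.C ((k.choose (j 0 + 1) : ℝ) *
          ∏ i ∈ Finset.univ.erase (0 : Fin (p+1)), (k.choose (j i) : ℝ)) *
        (X : ℝ[X]) ^ (∑ i, j i))
    = (∑ j ∈ Finset.range (k+1), Polynomial.C (k.choose (j+1) : ℝ) * (X:ℝ[X])^j) *
        ((X + 1) ^ k) ^ p := by
  have key : ∀ i : Fin (p+1), (∑ j ∈ Finset.range (k+1),
      Polynomial.C (k.choose (if i = 0 then j+1 else j) : ℝ) * (X:ℝ[X])^j)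
      = if i = 0 then (∑ j ∈ Finset.range (k+1), Polynomial.C (k.choose (j+1) : ℝ) * (X:ℝ[X])^j)
        else (X+1)^k := by
    intro i
    by_cases h : i = 0 <;> simp [h, hpow]
  calc (∑ j ∈ Fintype.piFinset (fun _ : Fin (p+1) => Finset.range (k+1)),
      Polynomial.C ((k.choose (j 0 + 1) : ℝ) *
          ∏ i ∈ Finset.univ.erase (0 : Fin (p+1)), (k.choose (j i) : ℝ)) *
        (X : ℝ[X]) ^ (∑ i, j i))
      = ∑ j ∈ Fintype.piFinset (fun _ : Fin (p+1) => Finset.range (k+1)),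
        ∏ i : Fin (p+1), (Polynomial.C (k.choose (if i = 0 then j i + 1 else j i) : ℝ) *
          (X:ℝ[X]) ^ (j i)) := by
        refine Finset.sum_congr rfl fun j _ => ?_
        rw [Finset.prod_mul_distrib, ← Finset.prod_pow_eq_pow_sum, ← map_prod]
        congr 2
        rw [← Finset.mul_prod_erase Finset.univ _ (Finset.mem_univ (0 : Fin (p+1)))]
        simp only [if_pos rfl]
        congr 1
        exact Finset.prod_congr rfl fun i hi => by rw [if_neg (Finset.ne_of_mem_erase hi)]
    _ = ∏ i : Fin (p+1), ∑ j ∈ Finset.range (k+1),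
          Polynomial.C (k.choose (if i = 0 then j+1 else j) : ℝ) * (X:ℝ[X])^j := by
        rw [Finset.prod_univ_sum]
    _ = _ := by
        simp only [key]
        rw [← Finset.mul_prod_erase (Finset.univ) _ (Finset.mem_univ (0 : Fin (p+1)))]
        simp only [if_pos rfl]
        congr 1
        rw [Finset.prod_congr rfl (fun i hi => if_neg (Finset.ne_of_mem_erase hi)),
          Finset.prod_const]
        congr 1
        simp [Finset.card_erase_of_mem]

private lemma coeffKey (p k m : ℕ) :
    Polynomial.coeff ((∑ j ∈ Finset.range (k+1), Polynomial.C (k.choose (j+1) : ℝ) * (X:ℝ[X])^j) *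
      ((X + 1) ^ k) ^ p) m
    = (((p+1)*k).choose (m+1) : ℝ) - ((p*k).choose (m+1) : ℝ) := by
  have h1 : (X:ℝ[X]) * (∑ j ∈ Finset.range (k+1), Polynomial.C (k.choose (j+1) : ℝ) * X^j)
      = (X+1)^k - 1 := by
    rw [Finset.mul_sum, hpow k, Finset.sum_range_succ (n := k), Finset.sum_range_succ' _ k]
    simp only [Nat.choose_eq_zero_of_lt (Nat.lt_succ_self k), Nat.cast_zero, map_zero, zero_mul,
      mul_zero, add_zero, Nat.choose_zero_right, Nat.cast_one, map_one, pow_zero, one_mul,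
      add_sub_cancel_right]
    refine Finset.sum_congr rfl fun j _ => ?_
    ring
  have h2 : (X:ℝ[X]) * ((∑ j ∈ Finset.range (k+1), Polynomial.C (k.choose (j+1) : ℝ) * X^j) *
      ((X + 1) ^ k) ^ p) = (X+1)^((p+1)*k) - (X+1)^(p*k) := by
    rw [← mul_assoc, h1, sub_mul, one_mul, ← pow_succ', ← pow_mul, ← pow_mul,
      Nat.mul_comm k (p+1), Nat.mul_comm k p]
  rw [← Polynomial.coeff_X_mul, h2]
  simp [coeff_X_add_one_pow]

end StatementSevenHelpers

/-- Example 6.2. For all `p ≥ 1`, `q ≥ 0`, `k ≥ 1` and real `t`: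
`Σ_{j₁,…,j_{p+1} ≥ 0} (1/k)·C(k,j₁+1)·C(k,j₂)⋯C(k,j_{p+1})·C(qk, |j|−pk)·t^{|j|}
 = Σ_{j=1}^k (1/k)·C((p+1)k, j−1)·C(qk, k−j)·t^{(p+1)k−j}`
(with the convention `C(n,m) = 0` unless `0 ≤ m ≤ n`; only finitely many terms on the
left are nonzero). -/
theorem statement7 (p q k : ℕ) (hp : 1 ≤ p) (hk : 1 ≤ k) (t : ℝ) :
    (∑ᶠ j : Fin (p+1) → ℕ,
      (1 / (k : ℝ)) * (Nat.choose k (j 0 + 1) : ℝ) *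
        (∏ i ∈ Finset.univ.erase (0 : Fin (p+1)), (Nat.choose k (j i) : ℝ)) *
        (if p*k ≤ ∑ i, j i then (Nat.choose (q*k) ((∑ i, j i) - p*k) : ℝ) else 0) *
        t ^ (∑ i, j i)) =
    ∑ j ∈ Finset.Icc 1 k,
      (1 / (k : ℝ)) * (Nat.choose ((p+1)*k) (j-1) : ℝ) * (Nat.choose (q*k) (k-j) : ℝ) *
        t ^ ((p+1)*k - j) := by
  classical
  set S := Fintype.piFinset (fun _ : Fin (p+1) => Finset.range (k+1)) with hS
  set F : (Fin (p+1) → ℕ) → ℝ := fun j =>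
    (1 / (k : ℝ)) * (Nat.choose k (j 0 + 1) : ℝ) *
      (∏ i ∈ Finset.univ.erase (0 : Fin (p+1)), (Nat.choose k (j i) : ℝ)) *
      (if p*k ≤ ∑ i, j i then (Nat.choose (q*k) ((∑ i, j i) - p*k) : ℝ) else 0) *
      t ^ (∑ i, j i) with hF
  have hsupp : Function.support F ⊆ ↑S := by
    intro j hj
    simp only [hS, Finset.coe_sort_coe, Finset.mem_coe, Fintype.mem_piFinset, Finset.mem_range,
      Nat.lt_succ_iff]
    intro i
    by_contra h
    push_neg at h
    apply hj
    by_cases hi : i = 0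
    · subst hi
      have h0 : k.choose (j 0 + 1) = 0 := Nat.choose_eq_zero_of_lt (by omega)
      simp [hF, h0]
    · have h0 : (∏ i' ∈ Finset.univ.erase (0 : Fin (p+1)), (Nat.choose k (j i') : ℝ)) = 0 := by
        refine Finset.prod_eq_zero (Finset.mem_erase.2 ⟨hi, Finset.mem_univ i⟩) ?_
        rw [Nat.choose_eq_zero_of_lt (by omega)]
        simp
      simp [hF, h0]
  rw [finsum_eq_sum_of_support_subset F hsupp]
  have hmaps : ∀ j ∈ S, (∑ i, j i) ∈ Finset.range ((p+1)*k+1) := by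
    intro j hj
    simp only [hS, Fintype.mem_piFinset, Finset.mem_range, Nat.lt_succ_iff] at hj ⊢
    calc ∑ i, j i ≤ ∑ _i : Fin (p+1), k := Finset.sum_le_sum fun i _ => hj i
      _ = (p+1)*k := by simp [Finset.sum_const, Finset.card_univ, mul_comm]
  rw [← Finset.sum_fiberwise_of_maps_to hmaps F]
  have hfiber : ∀ m ∈ Finset.range ((p+1)*k+1),
      (∑ j ∈ S.filter (fun j => (∑ i, j i) = m), F j)
      = (1/(k:ℝ)) * (if p*k ≤ m then ((q*k).choose (m - p*k) : ℝ) else 0) * t^m *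
        ((((p+1)*k).choose (m+1) : ℝ) - ((p*k).choose (m+1) : ℝ)) := by
    intro m _
    have hA : (∑ j ∈ S.filter (fun j => (∑ i, j i) = m),
        ((k.choose (j 0 + 1) : ℝ) * ∏ i ∈ Finset.univ.erase (0 : Fin (p+1)), (k.choose (j i) : ℝ)))
        = (((p+1)*k).choose (m+1) : ℝ) - ((p*k).choose (m+1) : ℝ) := by
      rw [← coeffKey p k m, ← keyPoly p k, Polynomial.finset_sum_coeff]
      simp only [Polynomial.coeff_C_mul, Polynomial.coeff_X_pow, mul_ite, mul_one, mul_zero]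
      rw [Finset.sum_filter]
      refine Finset.sum_congr rfl fun j _ => ?_
      by_cases h : (∑ i, j i) = m
      · rw [if_pos h, if_pos h.symm]
      · rw [if_neg h, if_neg (fun hm => h hm.symm)]
    calc (∑ j ∈ S.filter (fun j => (∑ i, j i) = m), F j)
        = ∑ j ∈ S.filter (fun j => (∑ i, j i) = m),
          (1/(k:ℝ)) * (if p*k ≤ m then ((q*k).choose (m-p*k):ℝ) else 0) * t^m *
            ((k.choose (j 0+1):ℝ) * ∏ i ∈ Finset.univ.erase (0:Fin (p+1)), (k.choose (j i):ℝ)) := by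
          refine Finset.sum_congr rfl fun j hj => ?_
          have hm : (∑ i, j i) = m := by
            simpa using (Finset.mem_filter.1 hj).2
          simp only [hF, hm]
          ring
      _ = _ := by rw [← Finset.mul_sum, hA]
  rw [Finset.sum_congr rfl hfiber]
  -- Now reindex m = (p+1)*k - j
  have hPK : (p+1)*k = p*k + k := by ring
  have himg : Finset.image (fun j => (p+1)*k - j) (Finset.Icc 1 k) ⊆ Finset.range ((p+1)*k+1) := by
    intro m hm
    simp only [Finset.mem_image, Finset.mem_Icc] at hm
    obtain ⟨j, ⟨h1, h2⟩, rfl⟩ := hm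
    simp only [Finset.mem_range]
    omega
  have hzero : ∀ m ∈ Finset.range ((p+1)*k+1),
      m ∉ Finset.image (fun j => (p+1)*k - j) (Finset.Icc 1 k) →
      (1/(k:ℝ)) * (if p*k ≤ m then ((q*k).choose (m - p*k) : ℝ) else 0) * t^m *
        ((((p+1)*k).choose (m+1) : ℝ) - ((p*k).choose (m+1) : ℝ)) = 0 := by
    intro m hm hnm
    simp only [Finset.mem_range] at hm
    by_cases hle : p*k ≤ m
    · have hm' : m = (p+1)*k := by
        by_contra hne
        exact hnm (Finset.mem_image.2 ⟨(p+1)*k - m, Finset.mem_Icc.2 (by omega), by omega⟩)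
      subst hm'
      have hc1 : ((p+1)*k).choose ((p+1)*k+1) = 0 := Nat.choose_eq_zero_of_lt (by omega)
      have hc2 : (p*k).choose ((p+1)*k+1) = 0 := Nat.choose_eq_zero_of_lt (by omega)
      rw [hc1, hc2]
      simp
    · simp [hle]
  have hinj : ∀ a ∈ Finset.Icc 1 k, ∀ b ∈ Finset.Icc 1 k,
      (p+1)*k - a = (p+1)*k - b → a = b := by
    intro a ha b hb hab
    simp only [Finset.mem_Icc] at ha hb
    omega
  rw [← Finset.sum_subset himg hzero, Finset.sum_image hinj]
  refine Finset.sum_congr rfl fun j hj => ?_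
  simp only [Finset.mem_Icc] at hj
  have h1 : p*k ≤ (p+1)*k - j := by omega
  have h2 : (p+1)*k - j - p*k = k - j := by omega
  have h3 : ((p+1)*k).choose ((p+1)*k - j + 1) = ((p+1)*k).choose (j-1) := by
    rw [← Nat.choose_symm (n := (p+1)*k) (k := (p+1)*k - j + 1) (by omega)]
    congr 1
    omega
  have h4 : (p*k).choose ((p+1)*k - j + 1) = 0 := Nat.choose_eq_zero_of_lt (by omega)
  rw [if_pos h1, h2, h3, h4]
  push_cast
  ring
end

section
/- Let ψ ∈ ℝ[[z]] have zero constant term and let ψ_e denote its even part. If ψ = z·(ψ + 1)·(ψ_e + 1) as formal power series, then ψ_e = z²·(ψ_e + 1)³, and for every n ≥ 1 the coefficient of z^{2n} in ψ equals the Fuss–Catalan number (1/(2n+1))·C(3n, n). -/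
open Finset
open scoped Classical

namespace St11

open PowerSeries

/-- Fuss–Catalan numbers as reals. -/
noncomputable def fc (n : ℕ) : ℝ := (1 / (2*(n:ℝ)+1)) * (Nat.choose (3*n) n : ℝ)

lemma fc_zero : fc 0 = 1 := by norm_num [fc]

lemma fc_one : fc 1 = 1 := by norm_num [fc]

open scoped Nat in
lemma fc_rec (k : ℕ) :
    (2*(k:ℝ)+2)*(2*(k:ℝ)+3) * fc (k+1) = 3*(3*(k:ℝ)+1)*(3*(k:ℝ)+2) * fc k := by
  have h1 : ((3*k).choose k : ℝ) = (3 * k)! / (k ! * (2 * k)!) := by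
    rw [Nat.cast_choose ℝ (by omega : k ≤ 3*k), show 3*k - k = 2*k from by omega]
  have h2 : ((3*(k+1)).choose (k+1) : ℝ) = (3 * k + 3)! / ((k + 1)! * (2 * k + 2)!) := by
    rw [Nat.cast_choose ℝ (by omega : k+1 ≤ 3*(k+1))]
    rw [show 3*(k+1) = 3*k+3 from by omega, show 3*k+3 - (k+1) = 2*k+2 from by omega]
  have e1 : ((3 * k + 3)! : ℝ) = ((3*k)+3)*((3*k)+2)*((3*k)+1)*(3 * k)! := by
    rw [show 3*k+3 = (3*k+2)+1 by omega, Nat.factorial_succ,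
        show 3*k+2 = (3*k+1)+1 by omega, Nat.factorial_succ,
        show 3*k+1 = (3*k)+1 by omega, Nat.factorial_succ]
    push_cast
    ring
  have e2 : (((k+1))! : ℝ) = ((k:ℝ)+1)*(k)! := by
    rw [Nat.factorial_succ]; push_cast; ring
  have e3 : ((2 * k + 2)! : ℝ) = ((2*k:ℝ)+2)*((2*k:ℝ)+1)*(2 * k)! := by
    rw [show 2*k+2 = (2*k+1)+1 by omega, Nat.factorial_succ,
        show 2*k+1 = (2*k)+1 by omega, Nat.factorial_succ]
    push_cast
    ring
  have hk : ((k)! : ℝ) ≠ 0 := by exact_mod_cast (Nat.factorial_pos k).ne'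
  have h2k : ((2 * k)! : ℝ) ≠ 0 := by exact_mod_cast (Nat.factorial_pos (2*k)).ne'
  have p1 : (2*(k:ℝ)+1) ≠ 0 := by positivity
  have p2 : (2*(k:ℝ)+3) ≠ 0 := by positivity
  have p3 : ((k:ℝ)+1) ≠ 0 := by positivity
  unfold fc
  rw [h1]
  push_cast [h2, e1, e2, e3]
  field_simp
  ring

lemma coeff_mul_zero {f g : PowerSeries ℝ} {n : ℕ}
    (h : ∀ i j, i + j = n → coeff i f * coeff j g = 0) :
    coeff n (f * g) = 0 := by
  rw [coeff_mul]
  exact Finset.sum_eq_zero fun p hp => h p.1 p.2 (Finset.HasAntidiagonal.mem_antidiagonal.mp hp)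

/-- all odd coefficients vanish -/
def IsE (f : PowerSeries ℝ) : Prop := ∀ n, ¬ Even n → coeff n f = 0
/-- all even coefficients vanish -/
def IsO (f : PowerSeries ℝ) : Prop := ∀ n, Even n → coeff n f = 0

lemma IsE.mul {f g : PowerSeries ℝ} (hf : IsE f) (hg : IsE g) : IsE (f * g) := by
  intro n hn
  refine coeff_mul_zero fun i j hij => ?_
  rcases Nat.even_or_odd i with hi | hi
  · rw [hg j (by simp [Nat.even_iff] at *; omega), mul_zero]
  · rw [hf i (by simp [Nat.even_iff, Nat.odd_iff] at *; omega), zero_mul]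

lemma IsO.mulE {f g : PowerSeries ℝ} (hf : IsO f) (hg : IsE g) : IsO (f * g) := by
  intro n hn
  refine coeff_mul_zero fun i j hij => ?_
  rcases Nat.even_or_odd i with hi | hi
  · rw [hf i hi, zero_mul]
  · rw [hg j (by simp [Nat.even_iff, Nat.odd_iff] at *; omega), mul_zero]

lemma IsO.mulO {f g : PowerSeries ℝ} (hf : IsO f) (hg : IsO g) : IsE (f * g) := by
  intro n hn
  refine coeff_mul_zero fun i j hij => ?_
  rcases Nat.even_or_odd i with hi | hi
  · rw [hf i hi, zero_mul]
  · rw [hg j (by simp [Nat.even_iff, Nat.odd_iff] at *; omega), mul_zero]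

lemma isO_X : IsO (X : PowerSeries ℝ) := by
  intro n hn
  rw [coeff_X, if_neg]
  rintro rfl
  simp [Nat.even_iff] at hn

lemma isE_one : IsE (1 : PowerSeries ℝ) := by
  intro n hn
  rw [coeff_one, if_neg]
  rintro rfl
  exact hn Even.zero

lemma isE_evenPart (f : PowerSeries ℝ) : IsE (evenPart f) := by
  intro n hn
  simp [evenPart, coeff_mk, if_neg hn]

lemma IsE.add {f g : PowerSeries ℝ} (hf : IsE f) (hg : IsE g) : IsE (f + g) := by
  intro n hn
  rw [map_add, hf n hn, hg n hn, add_zero]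

lemma coeff_evenPart_even (f : PowerSeries ℝ) {n : ℕ} (hn : Even n) :
    coeff n (evenPart f) = coeff n f := by
  simp [evenPart, coeff_mk, if_pos hn]

/-- Part 1 of the statement. -/
lemma part1 (ψ : PowerSeries ℝ)
    (heq : ψ = PowerSeries.X * (ψ + 1) * (evenPart ψ + 1)) :
    evenPart ψ = PowerSeries.X ^ 2 * (evenPart ψ + 1) ^ 3 := by
  set e := evenPart ψ with hedef
  have heE : IsE e := isE_evenPart ψ
  have hgE : IsE (e + 1) := heE.add isE_one
  have homO : IsO (ψ - e) := by
    intro n hn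
    rw [map_sub, hedef, coeff_evenPart_even ψ hn, sub_self]
  have hAO : IsO (X * ((e+1) * (e+1))) := isO_X.mulE (hgE.mul hgE)
  have hBE : IsE (X * (ψ - e) * (e+1)) := (isO_X.mulO homO).mul hgE
  have hsplit : ψ = X * ((e+1) * (e+1)) + X * (ψ - e) * (e+1) := by
    linear_combination heq
  have heB : e = X * (ψ - e) * (e+1) := by
    ext n
    by_cases hn : Even n
    · rw [hedef, coeff_evenPart_even ψ hn]
      conv_lhs => rw [hsplit]
      rw [map_add, hAO n hn, zero_add]
    · rw [heE n hn, hBE n hn]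
  have hom : ψ - e = X * ((e+1) * (e+1)) := by linear_combination hsplit - heB
  linear_combination heB + (X * (e+1)) * hom

/-- Part 2: the even coefficients are the Fuss–Catalan numbers. -/
lemma part2 (ψ : PowerSeries ℝ) (h0 : PowerSeries.constantCoeff ψ = 0)
    (heq : ψ = PowerSeries.X * (ψ + 1) * (evenPart ψ + 1)) :
    ∀ n : ℕ, coeff (2*n) (evenPart ψ + 1) = fc n := by
  have hp1 := part1 ψ heq
  obtain ⟨g, hgdef⟩ : ∃ g, g = evenPart ψ + 1 := ⟨_, rfl⟩
  have hg : g = 1 + X^2 * g^3 := by rw [hgdef]; linear_combination hp1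
  have hc0 : coeff 0 g = 1 := by
    rw [hgdef, map_add, coeff_evenPart_even ψ (Even.zero)]
    simp [coeff_zero_eq_constantCoeff, h0]
  have hcc : constantCoeff g = 1 := by
    rw [← coeff_zero_eq_constantCoeff_apply]; exact hc0
  have key : ∀ (k d : ℕ) (p : PowerSeries ℝ), d ≤ k →
      coeff k (X^d * p) = coeff (k-d) p := by
    intro k d p h
    rw [coeff_X_pow_mul']
    exact if_pos h
  have hc2 : coeff 2 g = 1 := by
    have h := congrArg (coeff 2) hg
    rw [map_add, key 2 2 _ (by omega)] at h
    simpa [coeff_zero_eq_constantCoeff, map_pow, hcc] using h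
  -- derivative equations
  have hg3 : (d⁄dX ℝ) (g^3) = 3 * g^2 * (d⁄dX ℝ) g := by
    rw [Derivation.leibniz_pow]
    norm_num [nsmul_eq_mul, smul_eq_mul]
    ring
  have hX2 : (d⁄dX ℝ) (X^2 : PowerSeries ℝ) = 2 * X := by
    rw [Derivation.leibniz_pow]
    norm_num [nsmul_eq_mul, smul_eq_mul]
  have h2 : (1 - 3*X^2*g^2) * ((d⁄dX ℝ) g) = 2*X*g^3 := by
    have hd := congrArg (⇑(d⁄dX ℝ)) hg
    rw [map_add, Derivation.leibniz, hg3, hX2, Derivation.map_one_eq_zero,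
      smul_eq_mul, smul_eq_mul] at hd
    linear_combination hd
  have hn3 : (d⁄dX ℝ) (3 : PowerSeries ℝ) = 0 := by
    rw [← map_ofNat (C : ℝ →+* PowerSeries ℝ) 3, derivative_C]
  have hn2 : (d⁄dX ℝ) (2 : PowerSeries ℝ) = 0 := by
    rw [← map_ofNat (C : ℝ →+* PowerSeries ℝ) 2, derivative_C]
  have h3 : (1 - 3*X^2*g^2) * ((d⁄dX ℝ) ((d⁄dX ℝ) g)) =
      2*g^3 + 12*X*g^2*((d⁄dX ℝ) g) + 6*X^2*g*((d⁄dX ℝ) g)^2 := by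
    have hd := congrArg (⇑(d⁄dX ℝ)) h2
    simp only [Derivation.leibniz, Derivation.leibniz_pow, map_sub, map_one,
      Derivation.map_one_eq_zero, derivative_C, derivative_X, smul_eq_mul, nsmul_eq_mul,
      hn3, hn2, mul_zero, zero_mul, mul_one, sub_zero, zero_sub, add_zero, zero_add,
      Nat.cast_ofNat] at hd
    linear_combination hd
  have hZ : (1 - 3*X^2*g^2)^3 * ((4*X^2*((d⁄dX ℝ) ((d⁄dX ℝ) g)) + 8*X*((d⁄dX ℝ) g))
      - (27*X^4*((d⁄dX ℝ) ((d⁄dX ℝ) g)) + 81*X^3*((d⁄dX ℝ) g) + 24*X^2*g)) = 0 := by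
    linear_combination ((4*X^2-27*X^4)*(1-3*X^2*g^2)^2) * h3
      + ((4*X^2-27*X^4)*(12*X*g^2*(1-3*X^2*g^2)
            + 6*X^2*g*((1-3*X^2*g^2)*((d⁄dX ℝ) g)+2*X*g^3))
          + (8*X-81*X^3)*(1-3*X^2*g^2)^2) * h2
      + (24*X^2*g + 24*X^2*g^2 - 24*X^4*g^4) * hg
  have hDne : ((1:PowerSeries ℝ) - 3*X^2*g^2)^3 ≠ 0 := by
    intro hD
    have h1 : constantCoeff (((1:PowerSeries ℝ) - 3*X^2*g^2)^3) = 1 := by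
      simp [map_pow, map_sub, map_mul, constantCoeff_X]
    rw [hD] at h1
    simp at h1
  have hODE : (4*X^2*((d⁄dX ℝ) ((d⁄dX ℝ) g)) + 8*X*((d⁄dX ℝ) g))
      = (27*X^4*((d⁄dX ℝ) ((d⁄dX ℝ) g)) + 81*X^3*((d⁄dX ℝ) g) + 24*X^2*g) :=
    sub_eq_zero.mp ((mul_eq_zero.mp hZ).resolve_left hDne)
  have hODE' : X^2*((C : ℝ →+* PowerSeries ℝ) 4*((d⁄dX ℝ) ((d⁄dX ℝ) g))) + X^1*((C : ℝ →+* PowerSeries ℝ) 8*((d⁄dX ℝ) g))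
      = X^4*((C : ℝ →+* PowerSeries ℝ) 27*((d⁄dX ℝ) ((d⁄dX ℝ) g))) + X^3*((C : ℝ →+* PowerSeries ℝ) 81*((d⁄dX ℝ) g))
        + X^2*((C : ℝ →+* PowerSeries ℝ) 24*g) := by
    simp only [map_ofNat, pow_one]
    linear_combination hODE
  have hrec : ∀ m : ℕ, coeff (2*m+4) g * ((2*(m:ℝ)+4)*(2*(m:ℝ)+5))
      = coeff (2*m+2) g * (3*(3*(m:ℝ)+4)*(3*(m:ℝ)+5)) := by
    intro m
    have h := congrArg (coeff (2*m+4)) hODE'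
    rw [map_add, map_add, map_add] at h
    rw [key _ 2 _ (by omega), key _ 1 _ (by omega), key _ 4 _ (by omega),
        key _ 3 _ (by omega), key _ 2 _ (by omega)] at h
    rw [show 2*m+4-2 = 2*m+2 from by omega, show 2*m+4-1 = 2*m+3 from by omega,
        show 2*m+4-4 = 2*m from by omega, show 2*m+4-3 = 2*m+1 from by omega] at h
    simp only [coeff_C_mul, coeff_derivative] at h
    rw [show 2*m+2+1+1 = 2*m+4 from by omega, show 2*m+3+1 = 2*m+4 from by omega,
        show 2*m+1+1 = 2*m+2 from by omega] at h
    push_cast at h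
    linear_combination h/4
  intro n
  rw [← hgdef]
  induction n with
  | zero =>
    rw [show 2*0 = 0 from rfl, hc0, fc_zero]
  | succ k ih =>
    cases k with
    | zero =>
      rw [show 2*1 = 2 from rfl, hc2, fc_one]
    | succ m =>
      have hr := hrec m
      rw [show 2*m+2 = 2*(m+1) from by omega, ih] at hr
      have hfc := fc_rec (m+1)
      push_cast at hfc
      have hne : ((2*(m:ℝ)+4)*(2*(m:ℝ)+5)) ≠ 0 := by positivity
      have : coeff (2*m+4) g = fc (m+2) := by
        apply mul_right_cancel₀ hne
        rw [hr]
        rw [show m+2 = (m+1)+1 from rfl]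
        linear_combination -hfc
      rw [show 2*(m+1+1) = 2*m+4 from by omega, this,
        show m+1+1 = m+2 from rfl]

end St11

/-- Example 7.1. If `ψ` has zero constant term and
`ψ = z·(ψ+1)·(ψ_e+1)`, where `ψ_e` is the even part of `ψ`, then
`ψ_e = z²·(ψ_e+1)³` and the coefficient of `z^{2n}` in `ψ` is the Fuss–Catalan number
`(1/(2n+1))·C(3n,n)` for every `n ≥ 1`. -/
theorem statement11 (ψ : PowerSeries ℝ) (h0 : PowerSeries.constantCoeff ψ = 0)
    (heq : ψ = PowerSeries.X * (ψ + 1) * (evenPart ψ + 1)) :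
    evenPart ψ = PowerSeries.X ^ 2 * (evenPart ψ + 1) ^ 3 ∧
    ∀ n : ℕ, 1 ≤ n →
      PowerSeries.coeff (2*n) ψ = (1 / (2*n+1 : ℝ)) * (Nat.choose (3*n) n : ℝ) := by
  refine ⟨St11.part1 ψ heq, ?_⟩
  intro n hn
  have h := St11.part2 ψ h0 heq n
  rw [map_add] at h
  have h1 : PowerSeries.coeff (2*n) (1 : PowerSeries ℝ) = 0 := by
    rw [PowerSeries.coeff_one, if_neg (by omega)]
  rw [h1, add_zero, St11.coeff_evenPart_even ψ ⟨n, by omega⟩] at h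
  rw [h]
  simp [St11.fc]
end

section
/- Let ψ ∈ ℝ[[z]] have zero constant term and let ψ_e denote its even part. If ψ = z·(ψ + 1)²·(ψ_e + 1) as formal power series, then (ψ_e + 1)² = 1 + 4z²·(ψ_e + 1)⁶. -/
open Finset
open scoped Classical

/-- Example 7.2, key computation. If `ψ` has zero constant term and
`ψ = z·(ψ+1)²·(ψ_e+1)`, where `ψ_e` is the even part of `ψ`, then
`(ψ_e+1)² = 1 + 4z²·(ψ_e+1)⁶`. -/
theorem statement12 (ψ : PowerSeries ℝ) (h0 : PowerSeries.constantCoeff ψ = 0)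
    (heq : ψ = PowerSeries.X * (ψ + 1) ^ 2 * (evenPart ψ + 1)) :
    (evenPart ψ + 1) ^ 2 = 1 + 4 * PowerSeries.X ^ 2 * (evenPart ψ + 1) ^ 6 := by
  set σ := PowerSeries.rescale (-1 : ℝ) with hσ
  set A := ψ + 1 with hA
  set B := σ ψ + 1 with hB
  set E := evenPart ψ + 1 with hE
  have hσeven : σ (evenPart ψ) = evenPart ψ := by
    ext n
    rw [hσ, PowerSeries.coeff_rescale]
    simp only [evenPart, PowerSeries.coeff_mk]
    rcases Nat.even_or_odd n with h | h
    · simp [h, h.neg_one_pow]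
    · simp [Nat.not_even_iff_odd.mpr h]
  have hsum : ψ + σ ψ = evenPart ψ + evenPart ψ := by
    ext n
    rw [map_add, map_add, hσ, PowerSeries.coeff_rescale]
    simp only [evenPart, PowerSeries.coeff_mk]
    rcases Nat.even_or_odd n with h | h
    · simp [h, h.neg_one_pow]
    · simp [Nat.not_even_iff_odd.mpr h, Odd.neg_one_pow h]
  have e3 : A + B = 2 * E := by
    rw [hA, hB, hE]; linear_combination hsum
  have e1 : A - 1 = PowerSeries.X * A ^ 2 * E := by
    rw [hA, hE]; linear_combination heq
  have e2 : B - 1 = -(PowerSeries.X * B ^ 2 * E) := by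
    have h' := congrArg σ heq
    rw [map_mul, map_mul, map_pow, map_add, map_one, map_add, map_one, hσeven] at h'
    rw [hσ, PowerSeries.rescale_neg_one_X] at h'
    rw [hB, hE]; linear_combination h'
  have h2 : (2 : PowerSeries ℝ) ≠ 0 := by
    intro h
    have := congrArg (PowerSeries.constantCoeff) h
    rw [map_ofNat, map_zero] at this
    norm_num at this
  have q2 : A - B = PowerSeries.X * E * (A ^ 2 + B ^ 2) := by
    linear_combination e1 - e2
  have q1' : E - 1 = PowerSeries.X * E ^ 2 * (A - B) := by
    apply mul_left_cancel₀ h2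
    linear_combination e1 + e2 + (PowerSeries.X * E * (A - B) - 1) * e3
  have q3 : E - 1 = PowerSeries.X ^ 2 * E ^ 3 * (A ^ 2 + B ^ 2) := by
    linear_combination q1' + PowerSeries.X * E ^ 2 * q2
  show E ^ 2 = 1 + 4 * PowerSeries.X ^ 2 * E ^ 6
  linear_combination (2 * E) * q3 - (E - 1 + PowerSeries.X * E ^ 2 * (A - B)) * q1'
    + PowerSeries.X ^ 2 * E ^ 4 * (A + B + 2 * E) * e3
end

section
/- Let M ∈ ℝ[[z]] be a formal power series with constant term 1 satisfying M² = 1 + 4z·M⁶, and let m_n denote the coefficient of z^n in M. Then for every n ≥ 0: (i) Σ_{k=0}^{n} m_k·m_{n−k} = (4^n/(3n+1))·C(3n+1, n); and (ii) m_n = 4^n·R_n(2, 1/2) = (2^n/n!)·Π_{j=1}^{n−1}(4n + 2j + 1). -/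
open Finset
open scoped Classical

section Statement13Aux

open PowerSeries

local notation "XX" => (PowerSeries.X : ℝ⟦X⟧)

private noncomputable def st13P (a b : ℕ) : ℝ := ∏ i ∈ Finset.Ico a b, ((2*i+1 : ℕ) : ℝ)

private lemma st13_L1 (n : ℕ) :
    (∏ j ∈ Finset.Icc 1 (n-1), ((4*n+2*j+1 : ℕ) : ℝ)) = st13P (2*n+1) (3*n) := by
  rw [st13P, ← Finset.Ico_add_one_right_eq_Icc, Finset.prod_Ico_eq_prod_range, Finset.prod_Ico_eq_prod_range]
  rw [show n - 1 + 1 - 1 = n - 1 from by omega, show 3*n - (2*n+1) = n-1 from by omega]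
  exact Finset.prod_congr rfl fun i _ => by congr 1; omega

private lemma st13_L2 (n : ℕ) :
    (∏ j ∈ Finset.Icc 1 n, ((4*(n+1)+2*j+1 : ℕ) : ℝ)) = st13P (2*n+3) (3*n+3) := by
  rw [st13P, ← Finset.Ico_add_one_right_eq_Icc, Finset.prod_Ico_eq_prod_range, Finset.prod_Ico_eq_prod_range]
  rw [show n + 1 - 1 = n from by omega, show 3*n+3 - (2*n+3) = n from by omega]
  exact Finset.prod_congr rfl fun i _ => by congr 1; omega

private lemma st13P_split (a b c : ℕ) (h1 : a ≤ b) (h2 : b ≤ c) :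
    st13P a b * st13P b c = st13P a c :=
  Finset.prod_Ico_consecutive _ h1 h2

private lemma st13P_two (a : ℕ) : st13P a (a+2) = ((2*a+1:ℕ):ℝ) * ((2*a+3:ℕ):ℝ) := by
  rw [st13P, Finset.prod_Ico_eq_prod_range, show a+2-a = 2 from by omega]
  rw [Finset.prod_range_succ, Finset.prod_range_succ, Finset.prod_range_zero]
  push_cast; ring

private lemma st13P_three (a : ℕ) :
    st13P a (a+3) = ((2*a+1:ℕ):ℝ) * ((2*a+3:ℕ):ℝ) * ((2*a+5:ℕ):ℝ) := by
  rw [st13P, Finset.prod_Ico_eq_prod_range, show a+3-a = 3 from by omega]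
  rw [Finset.prod_range_succ, Finset.prod_range_succ, Finset.prod_range_succ,
    Finset.prod_range_zero]
  push_cast; ring

private lemma st13_Hrec (n : ℕ) :
    (4*(n:ℝ)+3)*(4*(n:ℝ)+5) * ∏ j ∈ Finset.Icc 1 n, ((4*(n+1)+2*j+1 : ℕ) : ℝ)
    = (6*(n:ℝ)+1)*(6*(n:ℝ)+3)*(6*(n:ℝ)+5) * ∏ j ∈ Finset.Icc 1 (n-1), ((4*n+2*j+1 : ℕ) : ℝ) := by
  match n with
  | 0 =>
    norm_num
  | (m+1) =>
    rw [st13_L2 (m+1), st13_L1 (m+1)]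
    rw [show 2*(m+1)+3 = 2*m+5 from by omega, show 3*(m+1)+3 = 3*m+6 from by omega,
      show 2*(m+1)+1 = 2*m+3 from by omega, show 3*(m+1) = 3*m+3 from by omega]
    have A := st13P_split (2*m+3) (2*m+5) (3*m+6) (by omega) (by omega)
    have B := st13P_split (2*m+3) (3*m+3) (3*m+6) (by omega) (by omega)
    have C := st13P_two (2*m+3)
    have D := st13P_three (3*m+3)
    rw [show 2*m+3+2 = 2*m+5 from by omega] at C
    rw [show 3*m+3+3 = 3*m+6 from by omega] at D
    push_cast at C D ⊢
    linear_combination A - B - st13P (2*m+5) (3*m+6) * C + st13P (2*m+3) (3*m+3) * D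

private noncomputable def st13g (n : ℕ) : ℝ :=
  (2:ℝ)^n / (Nat.factorial n : ℝ) * ∏ j ∈ Finset.Icc 1 (n-1), ((4*n + 2*j + 1 : ℕ) : ℝ)

private lemma st13_grec (n : ℕ) :
    ((n:ℝ)+1)*(16*((n:ℝ)+1)^2 - 1) * st13g (n+1)
    = (432*((n:ℝ)+1)^3 - 648*((n:ℝ)+1)^2 + 276*((n:ℝ)+1) - 30) * st13g n := by
  have H := st13_Hrec n
  have h2 : ((Nat.factorial n : ℕ) : ℝ) ≠ 0 := Nat.cast_ne_zero.mpr n.factorial_ne_zero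
  have h1 : ((n:ℝ)+1) ≠ 0 := by positivity
  rw [st13g, st13g, Nat.add_sub_cancel, Nat.factorial_succ]
  push_cast at H ⊢
  field_simp at H ⊢
  linear_combination (2*2^n) * H
  -- old: (2*2^n*((n:ℝ)+1)*(Nat.factorial n : ℝ)) * H

private lemma st13_trec (n : ℕ) :
    ((n:ℝ)+1)*(2*((n:ℝ)+1)+1) * ((4:ℝ)^(n+1) / (3*((n:ℝ)+1)+1 : ℝ) * (Nat.choose (3*(n+1)+1) (n+1) : ℝ))
    = (54*((n:ℝ)+1)^2 - 54*((n:ℝ)+1) + 12) * ((4:ℝ)^n / (3*(n:ℝ)+1 : ℝ) * (Nat.choose (3*n+1) n : ℝ)) := by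
  have e1 : ((Nat.choose (3*n+1) n : ℕ) : ℝ)
      = ((3*n+1).factorial : ℝ) / ((n.factorial : ℝ) * ((2*n+1).factorial : ℝ)) := by
    rw [Nat.cast_choose ℝ (show n ≤ 3*n+1 by omega)]
    rw [show 3*n+1-n = 2*n+1 from by omega]
  have e2 : ((Nat.choose (3*(n+1)+1) (n+1) : ℕ) : ℝ)
      = (((3*(n+1)+1).factorial : ℕ) : ℝ) / (((n+1).factorial : ℝ) * (((2*(n+1)+1).factorial : ℕ) : ℝ)) := by
    rw [Nat.cast_choose ℝ (show n+1 ≤ 3*(n+1)+1 by omega)]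
    rw [show 3*(n+1)+1-(n+1) = 2*(n+1)+1 from by omega]
  have f1 : ((3*(n+1)+1).factorial : ℕ) = (3*n+4)*((3*n+3)*((3*n+2)*(3*n+1).factorial)) := by
    rw [show 3*(n+1)+1 = (3*n+3)+1 from by omega]
    rw [Nat.factorial_succ, Nat.factorial_succ, Nat.factorial_succ]
  have f2 : ((n+1).factorial : ℕ) = (n+1)*n.factorial := Nat.factorial_succ n
  have f3 : ((2*(n+1)+1).factorial : ℕ) = (2*n+3)*((2*n+2)*(2*n+1).factorial) := by
    rw [show 2*(n+1)+1 = (2*n+1)+2 from by omega, show (2*n+1)+2 = ((2*n+1)+1)+1 from rfl]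
    rw [Nat.factorial_succ, Nat.factorial_succ]
  rw [e1, e2, f1, f2, f3]
  have h1 : ((n.factorial : ℕ) : ℝ) ≠ 0 := Nat.cast_ne_zero.mpr n.factorial_ne_zero
  have h2 : (((2*n+1).factorial : ℕ) : ℝ) ≠ 0 := Nat.cast_ne_zero.mpr (Nat.factorial_ne_zero _)
  have h3 : (3*(n:ℝ)+1) ≠ 0 := by positivity
  have h4 : ((n:ℝ)+1) ≠ 0 := by positivity
  push_cast
  field_simp
  ring

private lemma st13_form2 (n : ℕ) :
    (4 : ℝ)^n * ((1/2) / ((3*n : ℝ) + 1/2)) *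
      ((∏ i ∈ Finset.range n, ((3*n : ℝ) + 1/2 - (i : ℝ))) / (Nat.factorial n : ℝ))
    = st13g n := by
  match n with
  | 0 => norm_num [st13g]
  | (m+1) =>
    set n := m + 1 with hn
    have hn1 : 1 ≤ n := by omega
    have S1 : (∏ i ∈ Finset.range n, ((3*n : ℝ) + 1/2 - (i : ℝ)))
        = ∏ j ∈ Finset.range n, (2*(n:ℝ) + 3/2 + (j:ℝ)) := by
      rw [← Finset.prod_range_reflect (fun i => (3*(n:ℕ):ℝ) + 1/2 - ((i:ℕ) : ℝ)) n]
      refine Finset.prod_congr rfl fun j hj => ?_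
      have hj' : j < n := Finset.mem_range.mp hj
      have e : (((n - 1 - j : ℕ)) : ℝ) = (n:ℝ) - 1 - (j:ℝ) := by
        have : n - 1 - j = n - (1+j) := by omega
        rw [this, Nat.cast_sub (by omega)]
        push_cast; ring
      rw [e]; ring
    have S2 : (∏ j ∈ Finset.range n, (4*(n:ℝ) + 2*(j:ℝ) + 3))
        = 2^n * ∏ j ∈ Finset.range n, (2*(n:ℝ) + 3/2 + (j:ℝ)) := by
      have e2 : (2:ℝ)^n = ∏ _j ∈ Finset.range n, (2:ℝ) := by
        rw [Finset.prod_const, Finset.card_range]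
      rw [e2, ← Finset.prod_mul_distrib]
      exact Finset.prod_congr rfl fun j _ => by ring
    have S3 : (∏ j ∈ Finset.range n, (4*(n:ℝ) + 2*(j:ℝ) + 3))
        = (6*(m:ℝ)+7) * ∏ j ∈ Finset.range m, (4*(n:ℝ) + 2*(j:ℝ) + 3) := by
      rw [hn, Finset.prod_range_succ]
      push_cast; ring
    have S4 : (∏ j ∈ Finset.Icc 1 (n-1), ((4*n + 2*j + 1 : ℕ) : ℝ))
        = ∏ j ∈ Finset.range m, (4*(n:ℝ) + 2*(j:ℝ) + 3) := by
      rw [show n - 1 = m from by omega, ← Finset.Ico_add_one_right_eq_Icc, Finset.prod_Ico_eq_prod_range]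
      rw [show m + 1 - 1 = m from by omega]
      refine Finset.prod_congr rfl fun i _ => ?_
      push_cast; ring
    rw [st13g, S1, S4]
    have h1 : ((Nat.factorial n : ℕ) : ℝ) ≠ 0 := Nat.cast_ne_zero.mpr n.factorial_ne_zero
    have h2 : (3*(n:ℝ) + 1/2) ≠ 0 := by positivity
    have h3 : (2:ℝ)^n ≠ 0 := by positivity
    have hB : (∏ j ∈ Finset.range n, (2*(n:ℝ) + 3/2 + (j:ℝ)))
        = (6*(m:ℝ)+7) * (∏ j ∈ Finset.range m, (4*(n:ℝ) + 2*(j:ℝ) + 3)) / 2^n := by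
      rw [eq_div_iff h3]
      linear_combination S3 - S2
    rw [hB]
    have h67 : (6*(m:ℝ)+7) ≠ 0 := by positivity
    have hnm : 3*(n:ℝ) + 1/2 = (6*(m:ℝ)+7)/2 := by push_cast [hn]; ring
    rw [hnm]
    have h4 : (4:ℝ)^n = 2^n * 2^n := by rw [← mul_pow]; norm_num
    rw [h4]
    field_simp

private lemma st13_odeN (N e1 e2 : ℝ⟦X⟧) (hc : PowerSeries.constantCoeff N = 1)
    (h0 : N - 1 - 4*XX*N^3 = 0)
    (h1 : 1*e1 + (-4)*N^3 + (-12)*XX*N^2*e1 = 0)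
    (h2 : 1*e2 + (-24)*N^2*e1 + (-24)*XX*N*e1^2 + (-12)*XX*N^2*e2 = 0) :
    3*XX*e1 + (-12)*XX*N + 2*XX^2*e2 + (-108)*XX^2*e1 + (-54)*XX^3*e2 = 0 := by
  have hL : (1 - 12*XX*N^2 : ℝ⟦X⟧) ≠ 0 := by
    intro h
    have := congrArg PowerSeries.constantCoeff h
    simp [hc] at this
  have hX4 : ((-4)*XX : ℝ⟦X⟧) ≠ 0 := by
    refine mul_ne_zero ?_ PowerSeries.X_ne_zero
    intro h
    have := congrArg PowerSeries.constantCoeff h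
    simp [map_ofNat] at this
  have key : (((-4)*XX)^3 * (1 - 12*XX*N^2)^3) *
      (3*XX*e1 + (-12)*XX*N + 2*XX^2*e2 + (-108)*XX^2*e1 + (-54)*XX^3*e2) = 0 := by
    linear_combination (((-4)*XX)^3*(1 - 12*XX*N^2)^2*(2*XX^2 + (-54)*XX^3))*h2 + (((-4)*XX)^3*(3*XX + (-108)*XX^2 + (-24)*XX^2*N^2 + 48*XX^3*N*e1 + 1296*XX^3*N^2 + 48*XX^3*N^4 + (-1296)*XX^4*N*e1 + (-576)*XX^4*N^3*e1 + (-5184)*XX^4*N^4 + 15552*XX^5*N^3*e1))*h1 + ((-768)*XX^4*N + (-768)*XX^4*N^2 + 3072*XX^5*N^4)*h0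
  rcases mul_eq_zero.mp key with h | h
  · exact absurd h (mul_ne_zero (pow_ne_zero _ hX4) (pow_ne_zero _ hL))
  · exact h

private lemma st13_odeM (M d1 d2 d3 : ℝ⟦X⟧) (hc : PowerSeries.constantCoeff M = 1)
    (h0 : M^2 - 1 - 4*XX*M^6 = 0)
    (h1 : 2*M*d1 + (-4)*M^6 + (-24)*XX*M^5*d1 = 0)
    (h2 : 2*d1^2 + 2*M*d2 + (-48)*M^5*d1 + (-120)*XX*M^4*d1^2 + (-24)*XX*M^5*d2 = 0)
    (h3 : 6*d1*d2 + 2*M*d3 + (-360)*M^4*d1^2 + (-72)*M^5*d2 + (-480)*XX*M^3*d1^3 + (-360)*XX*M^4*d1*d2 + (-24)*XX*M^5*d3 = 0) :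
    15*XX*d1 + (-30)*XX*M + 48*XX^2*d2 + (-1356)*XX^2*d1 + 16*XX^3*d3 + (-1944)*XX^3*d2 + (-432)*XX^4*d3 = 0 := by
  have hL : (2*M - 24*XX*M^5 : ℝ⟦X⟧) ≠ 0 := by
    intro h
    have := congrArg PowerSeries.constantCoeff h
    simp [hc, map_ofNat] at this
  have hX4 : ((-4)*XX : ℝ⟦X⟧) ≠ 0 := by
    refine mul_ne_zero ?_ PowerSeries.X_ne_zero
    intro h
    have := congrArg PowerSeries.constantCoeff h
    simp [map_ofNat] at this
  have key : (((-4)*XX)^7 * (2*M - 24*XX*M^5)^5) *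
      (15*XX*d1 + (-30)*XX*M + 48*XX^2*d2 + (-1356)*XX^2*d1 + 16*XX^3*d3 + (-1944)*XX^3*d2 + (-432)*XX^4*d3) = 0 := by
    linear_combination (((-4)*XX)^7*(2*M - 24*XX*M^5)^4*(16*XX^3 + (-432)*XX^4))*h3 + (((-4)*XX)^7*(2*M - 24*XX*M^5)^3*(96*XX^2*M + (-96)*XX^3*d1 + (-3888)*XX^3*M + 2592*XX^4*d1 + 5760*XX^4*M^4*d1 + 15552*XX^4*M^5 + (-155520)*XX^5*M^4*d1))*h2 + (((-4)*XX)^7*(240*XX*M^4 + (-768)*XX^2*M^3*d1 + (-21696)*XX^2*M^4 + 5376*XX^2*M^8 + 768*XX^3*M^2*d1^2 + 31104*XX^3*M^3*d1 + 93696*XX^3*M^7*d1 + 357120*XX^3*M^8 + (-66048)*XX^3*M^12 + (-20736)*XX^4*M^2*d1^2 + (-49152)*XX^4*M^6*d1^2 + (-3525120)*XX^4*M^7*d1 + (-1406976)*XX^4*M^11*d1 + (-4147200)*XX^4*M^12 + 208896*XX^4*M^16 + 1327104*XX^5*M^6*d1^2 + 2875392*XX^5*M^10*d1^2 + 64862208*XX^5*M^11*d1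 + 2138112*XX^5*M^15*d1 + 24883200*XX^5*M^16 + (-184320)*XX^5*M^20 + (-77635584)*XX^6*M^10*d1^2 + (-53084160)*XX^6*M^14*d1^2 + (-344383488)*XX^6*M^15*d1 + 30965760*XX^6*M^19*d1 + (-59719680)*XX^6*M^20 + 1433272320*XX^7*M^14*d1^2 + 291962880*XX^7*M^18*d1^2 + 238878720*XX^7*M^19*d1 + (-7882997760)*XX^8*M^18*d1^2))*h1 + ((-15728640)*XX^8*M^6 + (-15728640)*XX^8*M^8 + (-478150656)*XX^9*M^10 + (-415236096)*XX^9*M^12 + 754974720*XX^10*M^14 + 2667577344*XX^10*M^16 + (-3019898880)*XX^11*M^20)*h0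
  rcases mul_eq_zero.mp key with h | h
  · exact absurd h (mul_ne_zero (pow_ne_zero _ hX4) (pow_ne_zero _ hL))
  · exact h

end Statement13Aux

set_option maxHeartbeats 1600000 in
open PowerSeries in
/-- conclusion of Example 7.2. If `M` has constant term 1 and
`M² = 1 + 4z·M⁶`, with `m_n` the coefficient of `zⁿ` in `M`, then for every `n`:
(i) `Σ_{k=0}^n m_k·m_{n−k} = (4ⁿ/(3n+1))·C(3n+1, n)`, and
(ii) `m_n = 4ⁿ·R_n(2,1/2) = (2ⁿ/n!)·Π_{j=1}^{n−1}(4n+2j+1)`, where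
`R_n(2,1/2) = ((1/2)/(3n+1/2))·C(3n+1/2, n)` with the generalized binomial coefficient
`C(x,n) = x(x−1)⋯(x−n+1)/n!`. -/
theorem statement13 (M : PowerSeries ℝ) (h0 : PowerSeries.constantCoeff M = 1)
    (heq : M ^ 2 = 1 + 4 * PowerSeries.X * M ^ 6) :
    ∀ n : ℕ,
      (∑ k ∈ Finset.range (n+1),
          PowerSeries.coeff k M * PowerSeries.coeff (n-k) M =
        (4 : ℝ)^n / (3*n+1 : ℝ) * (Nat.choose (3*n+1) n : ℝ)) ∧
      (PowerSeries.coeff n M =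
        (4 : ℝ)^n * ((1/2) / ((3*n : ℝ) + 1/2)) *
          ((∏ i ∈ Finset.range n, ((3*n : ℝ) + 1/2 - (i : ℝ))) / (Nat.factorial n : ℝ))) ∧
      (PowerSeries.coeff n M =
        (2 : ℝ)^n / (Nat.factorial n : ℝ) *
          ∏ j ∈ Finset.Icc 1 (n-1), ((4*n + 2*j + 1 : ℕ) : ℝ)) := by
  classical
  -- abbreviation
  have hXabbrev : True := trivial
  -- ### M-side ODE
  set d1 := PowerSeries.derivative ℝ M with hd1
  set d2 := PowerSeries.derivative ℝ d1 with hd2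
  set d3 := PowerSeries.derivative ℝ d2 with hd3
  have hp0 : M^2 - 1 - 4*(PowerSeries.X : ℝ⟦X⟧)*M^6 = 0 := by linear_combination heq
  have hp1 : 2*M*d1 + (-4)*M^6 + (-24)*(PowerSeries.X : ℝ⟦X⟧)*M^5*d1 = 0 := by
    have h0' : M^2 - 1 - ((4:ℕ):ℝ⟦X⟧)*(PowerSeries.X : ℝ⟦X⟧)*M^6 = 0 := by
      push_cast; linear_combination heq
    have h := congrArg (PowerSeries.derivative ℝ) h0'
    simp only [Derivation.leibniz, Derivation.leibniz_pow, map_add, map_sub, map_zero,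
      Derivation.map_one_eq_zero, Derivation.map_natCast, smul_eq_mul, nsmul_eq_mul,
      PowerSeries.derivative_X, ← hd1] at h
    push_cast at h
    linear_combination h
  have hp2 : 2*d1^2 + 2*M*d2 + (-48)*M^5*d1 + (-120)*(PowerSeries.X : ℝ⟦X⟧)*M^4*d1^2
      + (-24)*(PowerSeries.X : ℝ⟦X⟧)*M^5*d2 = 0 := by
    have h1' : ((2:ℕ):ℝ⟦X⟧)*M*d1 - ((4:ℕ):ℝ⟦X⟧)*M^6
        - ((24:ℕ):ℝ⟦X⟧)*(PowerSeries.X : ℝ⟦X⟧)*M^5*d1 = 0 := by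
      push_cast; linear_combination hp1
    have h := congrArg (PowerSeries.derivative ℝ) h1'
    simp only [Derivation.leibniz, Derivation.leibniz_pow, map_add, map_sub, map_zero,
      Derivation.map_one_eq_zero, Derivation.map_natCast, smul_eq_mul, nsmul_eq_mul,
      PowerSeries.derivative_X, ← hd1, ← hd2] at h
    push_cast at h
    linear_combination h
  have hp3 : 6*d1*d2 + 2*M*d3 + (-360)*M^4*d1^2 + (-72)*M^5*d2
      + (-480)*(PowerSeries.X : ℝ⟦X⟧)*M^3*d1^3
      + (-360)*(PowerSeries.X : ℝ⟦X⟧)*M^4*d1*d2 + (-24)*(PowerSeries.X : ℝ⟦X⟧)*M^5*d3 = 0 := by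
    have h2' : ((2:ℕ):ℝ⟦X⟧)*d1^2 + ((2:ℕ):ℝ⟦X⟧)*M*d2 - ((48:ℕ):ℝ⟦X⟧)*M^5*d1
        - ((120:ℕ):ℝ⟦X⟧)*(PowerSeries.X : ℝ⟦X⟧)*M^4*d1^2
        - ((24:ℕ):ℝ⟦X⟧)*(PowerSeries.X : ℝ⟦X⟧)*M^5*d2 = 0 := by
      push_cast; linear_combination hp2
    have h := congrArg (PowerSeries.derivative ℝ) h2'
    simp only [Derivation.leibniz, Derivation.leibniz_pow, map_add, map_sub, map_zero,
      Derivation.map_one_eq_zero, Derivation.map_natCast, smul_eq_mul, nsmul_eq_mul,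
      PowerSeries.derivative_X, ← hd1, ← hd2, ← hd3] at h
    push_cast at h
    linear_combination h
  have EM0 := st13_odeM M d1 d2 d3 h0 hp0 hp1 hp2 hp3
  rw [hd3, hd2, hd1] at EM0
  have EM' : (PowerSeries.C (R := ℝ) 15) * ((PowerSeries.X : ℝ⟦X⟧)*(PowerSeries.derivative ℝ M))
      + (PowerSeries.C (R := ℝ) 48) * ((PowerSeries.X : ℝ⟦X⟧)*((PowerSeries.X : ℝ⟦X⟧)*(PowerSeries.derivative ℝ (PowerSeries.derivative ℝ M))))
      + (PowerSeries.C (R := ℝ) 16) * ((PowerSeries.X : ℝ⟦X⟧)*((PowerSeries.X : ℝ⟦X⟧)*((PowerSeries.X : ℝ⟦X⟧)*(PowerSeries.derivative ℝ (PowerSeries.derivative ℝ (PowerSeries.derivative ℝ M)))))) =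
      (PowerSeries.C (R := ℝ) 30) * ((PowerSeries.X : ℝ⟦X⟧)*M)
      + (PowerSeries.C (R := ℝ) 1356) * ((PowerSeries.X : ℝ⟦X⟧)*((PowerSeries.X : ℝ⟦X⟧)*(PowerSeries.derivative ℝ M)))
      + (PowerSeries.C (R := ℝ) 1944) * ((PowerSeries.X : ℝ⟦X⟧)*((PowerSeries.X : ℝ⟦X⟧)*((PowerSeries.X : ℝ⟦X⟧)*(PowerSeries.derivative ℝ (PowerSeries.derivative ℝ M)))))
      + (PowerSeries.C (R := ℝ) 432) * ((PowerSeries.X : ℝ⟦X⟧)*((PowerSeries.X : ℝ⟦X⟧)*((PowerSeries.X : ℝ⟦X⟧)*((PowerSeries.X : ℝ⟦X⟧)*(PowerSeries.derivative ℝ (PowerSeries.derivative ℝ (PowerSeries.derivative ℝ M))))))) := by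
    simp only [map_ofNat]
    linear_combination EM0
  have recM : ∀ n : ℕ, ((n:ℝ)+1)*(16*((n:ℝ)+1)^2 - 1) * PowerSeries.coeff (n+1) M =
      (432*((n:ℝ)+1)^3 - 648*((n:ℝ)+1)^2 + 276*((n:ℝ)+1) - 30) * PowerSeries.coeff n M := by
    intro n
    match n with
    | 0 =>
      have h := congrArg (PowerSeries.coeff (0+1)) EM'
      simp only [map_add, PowerSeries.coeff_C_mul, PowerSeries.coeff_succ_X_mul,
        PowerSeries.coeff_zero_X_mul, PowerSeries.coeff_derivative] at h
      push_cast at h ⊢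
      norm_num at h ⊢
      linear_combination h
    | 1 =>
      have h := congrArg (PowerSeries.coeff (0+1+1)) EM'
      simp only [map_add, PowerSeries.coeff_C_mul, PowerSeries.coeff_succ_X_mul,
        PowerSeries.coeff_zero_X_mul, PowerSeries.coeff_derivative] at h
      push_cast at h ⊢
      norm_num at h ⊢
      linear_combination h
    | 2 =>
      have h := congrArg (PowerSeries.coeff (0+1+1+1)) EM'
      simp only [map_add, PowerSeries.coeff_C_mul, PowerSeries.coeff_succ_X_mul,
        PowerSeries.coeff_zero_X_mul, PowerSeries.coeff_derivative] at h
      push_cast at h ⊢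
      norm_num at h ⊢
      linear_combination h
    | (k+3) =>
      have h := congrArg (PowerSeries.coeff (k+1+1+1+1)) EM'
      simp only [map_add, PowerSeries.coeff_C_mul, PowerSeries.coeff_succ_X_mul,
        PowerSeries.coeff_zero_X_mul, PowerSeries.coeff_derivative] at h
      have e1 : k+1+1+1+1 = k+4 := by omega
      have e2 : k+1+1+1 = k+3 := by omega
      rw [e1, e2] at h
      push_cast at h ⊢
      linear_combination h
  -- ### N-side ODE
  set N := M^2 with hN
  set e1 := PowerSeries.derivative ℝ N with he1
  set e2 := PowerSeries.derivative ℝ e1 with he2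
  have hcN : PowerSeries.constantCoeff N = 1 := by
    rw [hN, map_pow, h0, one_pow]
  have hq0 : N - 1 - 4*(PowerSeries.X : ℝ⟦X⟧)*N^3 = 0 := by
    rw [hN]; linear_combination heq
  have hq1 : 1*e1 + (-4)*N^3 + (-12)*(PowerSeries.X : ℝ⟦X⟧)*N^2*e1 = 0 := by
    have h0' : N - 1 - ((4:ℕ):ℝ⟦X⟧)*(PowerSeries.X : ℝ⟦X⟧)*N^3 = 0 := by
      push_cast; linear_combination hq0
    have h := congrArg (PowerSeries.derivative ℝ) h0'
    simp only [Derivation.leibniz, Derivation.leibniz_pow, map_add, map_sub, map_zero,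
      Derivation.map_one_eq_zero, Derivation.map_natCast, smul_eq_mul, nsmul_eq_mul,
      PowerSeries.derivative_X, ← he1] at h
    push_cast at h
    linear_combination h
  have hq2 : 1*e2 + (-24)*N^2*e1 + (-24)*(PowerSeries.X : ℝ⟦X⟧)*N*e1^2
      + (-12)*(PowerSeries.X : ℝ⟦X⟧)*N^2*e2 = 0 := by
    have h1' : e1 - ((4:ℕ):ℝ⟦X⟧)*N^3 - ((12:ℕ):ℝ⟦X⟧)*(PowerSeries.X : ℝ⟦X⟧)*N^2*e1 = 0 := by
      push_cast; linear_combination hq1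
    have h := congrArg (PowerSeries.derivative ℝ) h1'
    simp only [Derivation.leibniz, Derivation.leibniz_pow, map_add, map_sub, map_zero,
      Derivation.map_one_eq_zero, Derivation.map_natCast, smul_eq_mul, nsmul_eq_mul,
      PowerSeries.derivative_X, ← he1, ← he2] at h
    push_cast at h
    linear_combination h
  have EN0 := st13_odeN N e1 e2 hcN hq0 hq1 hq2
  rw [he2, he1] at EN0
  have EN' : (PowerSeries.C (R := ℝ) 3) * ((PowerSeries.X : ℝ⟦X⟧)*(PowerSeries.derivative ℝ N))
      + (PowerSeries.C (R := ℝ) 2) * ((PowerSeries.X : ℝ⟦X⟧)*((PowerSeries.X : ℝ⟦X⟧)*(PowerSeries.derivative ℝ (PowerSeries.derivative ℝ N)))) =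
      (PowerSeries.C (R := ℝ) 12) * ((PowerSeries.X : ℝ⟦X⟧)*N)
      + (PowerSeries.C (R := ℝ) 108) * ((PowerSeries.X : ℝ⟦X⟧)*((PowerSeries.X : ℝ⟦X⟧)*(PowerSeries.derivative ℝ N)))
      + (PowerSeries.C (R := ℝ) 54) * ((PowerSeries.X : ℝ⟦X⟧)*((PowerSeries.X : ℝ⟦X⟧)*((PowerSeries.X : ℝ⟦X⟧)*(PowerSeries.derivative ℝ (PowerSeries.derivative ℝ N))))) := by
    simp only [map_ofNat]
    linear_combination EN0
  have recN : ∀ n : ℕ, ((n:ℝ)+1)*(2*((n:ℝ)+1)+1) * PowerSeries.coeff (n+1) N =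
      (54*((n:ℝ)+1)^2 - 54*((n:ℝ)+1) + 12) * PowerSeries.coeff n N := by
    intro n
    match n with
    | 0 =>
      have h := congrArg (PowerSeries.coeff (0+1)) EN'
      simp only [map_add, PowerSeries.coeff_C_mul, PowerSeries.coeff_succ_X_mul,
        PowerSeries.coeff_zero_X_mul, PowerSeries.coeff_derivative] at h
      push_cast at h ⊢
      norm_num at h ⊢
      linear_combination h
    | 1 =>
      have h := congrArg (PowerSeries.coeff (0+1+1)) EN'
      simp only [map_add, PowerSeries.coeff_C_mul, PowerSeries.coeff_succ_X_mul,
        PowerSeries.coeff_zero_X_mul, PowerSeries.coeff_derivative] at h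
      push_cast at h ⊢
      norm_num at h ⊢
      linear_combination h
    | (k+2) =>
      have h := congrArg (PowerSeries.coeff (k+1+1+1)) EN'
      simp only [map_add, PowerSeries.coeff_C_mul, PowerSeries.coeff_succ_X_mul,
        PowerSeries.coeff_zero_X_mul, PowerSeries.coeff_derivative] at h
      have e1' : k+1+1+1 = k+3 := by omega
      have e2' : k+1+1 = k+2 := by omega
      rw [e1', e2'] at h
      push_cast at h ⊢
      linear_combination h
  -- ### inductions
  have hmg : ∀ n : ℕ, PowerSeries.coeff n M = st13g n := by
    intro n
    induction n with
    | zero =>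
      rw [PowerSeries.coeff_zero_eq_constantCoeff, h0]
      norm_num [st13g]
    | succ k ih =>
      have hr := recM k
      rw [ih] at hr
      have hg := st13_grec k
      have hk : (0:ℝ) ≤ (k:ℝ) := Nat.cast_nonneg k
      have hP : ((k:ℝ)+1)*(16*((k:ℝ)+1)^2 - 1) ≠ 0 := by nlinarith
      exact mul_left_cancel₀ hP (by linear_combination hr - hg)
  have hNt : ∀ n : ℕ, PowerSeries.coeff n N =
      (4 : ℝ)^n / (3*(n:ℝ)+1 : ℝ) * (Nat.choose (3*n+1) n : ℝ) := by
    intro n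
    induction n with
    | zero =>
      rw [PowerSeries.coeff_zero_eq_constantCoeff, hcN]
      norm_num
    | succ k ih =>
      have hr := recN k
      rw [ih] at hr
      have ht := st13_trec k
      have hk : (0:ℝ) ≤ (k:ℝ) := Nat.cast_nonneg k
      have hP : ((k:ℝ)+1)*(2*((k:ℝ)+1)+1) ≠ 0 := by nlinarith
      refine mul_left_cancel₀ hP ?_
      push_cast
      linear_combination hr - ht
  -- ### conclusion
  intro n
  refine ⟨?_, ?_, ?_⟩
  · have hsum : ∑ k ∈ Finset.range (n+1),
        PowerSeries.coeff k M * PowerSeries.coeff (n-k) M = PowerSeries.coeff n N := by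
      rw [hN, pow_two, PowerSeries.coeff_mul,
        Finset.Nat.sum_antidiagonal_eq_sum_range_succ
          (fun a b => PowerSeries.coeff a M * PowerSeries.coeff b M) n]
    rw [hsum, hNt n]
  · rw [hmg n]
    exact (st13_form2 n).symm
  · rw [hmg n]
    rfl
end

section
/- Fix integers p ≥ 1 and k ≥ 1. Let σ be a noncrossing perfect matching of {1,…,4pk} such that every pair {a,b} ∈ σ satisfies at least one of: (1) a+b ≡ 1 (mod 4p); (2) {ρ̃(a), ρ̃(b)} = {2i, 2i+1} for some 1 ≤ i ≤ p−1; (3) {ρ̃(a), ρ̃(b)} = {4p−2i, 4p+1−2i} for some 1 ≤ i ≤ p−1, where ρ̃(t) ∈ {1,…,4p} is the residue of t modulo 4p. Then σ has even depth: every pair P ∈ σ that contains no other pair nested inside it (i.e., there is no P' ∈ σ with min P < min P' < max P' < max P) has even depth, where the depth of a pair P is defined as 1 plus the number of pairs P'' ∈ σ with min P'' < min P < max P < max P''. -/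
open Finset
open scoped Classical

lemma blocks_eq {n : ℕ} {Q : Finset (Finset (Fin n))} (hQ : IsPartitionOf n Q)
    {B B' : Finset (Fin n)} (hB : B ∈ Q) (hB' : B' ∈ Q)
    {x : Fin n} (hx : x ∈ B) (hx' : x ∈ B') : B = B' := by
  obtain ⟨C, -, hCu⟩ := hQ.2 x
  rw [hCu B ⟨hB, hx⟩, hCu B' ⟨hB', hx'⟩]

lemma pp_block_eq {n : ℕ} {Q : Finset (Finset (Fin n))} (hQ : IsPairPartition n Q)
    {B : Finset (Fin n)} (hB : B ∈ Q) {a b : Fin n} (ha : a ∈ B) (hb : b ∈ B)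
    (hab : a ≠ b) : B = {a, b} := by
  have h2 : ({a, b} : Finset (Fin n)).card = 2 := Finset.card_pair hab
  have hsub : ({a, b} : Finset (Fin n)) ⊆ B := by
    intro x hx
    simp only [Finset.mem_insert, Finset.mem_singleton] at hx
    rcases hx with h | h <;> subst h <;> assumption
  exact (Finset.eq_of_subset_of_card_le hsub (by rw [h2, hQ.2 B hB])).symm

/-- even-depth property from the proof of Lemma 4.1. Every
noncrossing perfect matching of `{1,…,4pk}` adapted to `W̃^k` (each pair satisfies
`a+b ≡ 1 (mod 4p)`, or has residues `{2i,2i+1}`, or `{4p−2i,4p+1−2i}` mod `4p` for some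
`1 ≤ i ≤ p−1`) has even depth: every pair with no pair nested inside it has even depth,
where the depth of a pair `P` is `1` plus the number of pairs `P''` with
`min P'' < min P < max P < max P''`. -/
theorem statement15 (p k : ℕ) (hp : 1 ≤ p) (hk : 1 ≤ k)
    (Q : Finset (Finset (Fin (4*p*k))))
    (hQ : IsPairPartition (4*p*k) Q) (hnc : IsNoncrossing Q)
    (hadapted : ∀ B ∈ Q, ∀ a ∈ B, ∀ b ∈ B, a ≠ b →
      ((val1 a : ZMod (4*p)) + (val1 b : ZMod (4*p)) = 1) ∨
      (∃ i : ℕ, 1 ≤ i ∧ i ≤ p - 1 ∧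
        ((res a (4*p) = 2*i ∧ res b (4*p) = 2*i + 1) ∨
         (res a (4*p) = 2*i + 1 ∧ res b (4*p) = 2*i))) ∨
      (∃ i : ℕ, 1 ≤ i ∧ i ≤ p - 1 ∧
        ((res a (4*p) = 4*p - 2*i ∧ res b (4*p) = 4*p + 1 - 2*i) ∨
         (res a (4*p) = 4*p + 1 - 2*i ∧ res b (4*p) = 4*p - 2*i)))) :
    ∀ B ∈ Q, ∀ a ∈ B, ∀ b ∈ B, a < b →
      -- `B = {a, b}` contains no other pair of `Q` nested inside it
      (¬ ∃ B' ∈ Q, ∃ a' ∈ B', ∃ b' ∈ B', a < a' ∧ a' < b' ∧ b' < b) →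
      -- then the depth of `B` is even
      Even ((Q.filter (fun B'' =>
        (∃ a'' ∈ B'', a'' < a) ∧ (∃ b'' ∈ B'', b < b''))).card + 1) := by
  intro B hB a ha b hb hab hno
  have hBab : B = {a, b} := pp_block_eq hQ hB ha hb hab.ne
  -- Step 1: b = a + 1
  have hb1 : b.val = a.val + 1 := by
    by_contra hcon
    have hlt : a.val + 1 < b.val := by
      have := hab; rw [Fin.lt_def] at this; omega
    set c : Fin (4*p*k) := ⟨a.val + 1, lt_trans hlt b.isLt⟩ with hc
    have hac : a < c := by rw [Fin.lt_def]; simp [hc]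
    have hcb : c < b := by rw [Fin.lt_def]; simpa [hc] using hlt
    obtain ⟨B', ⟨hB', hcB'⟩, -⟩ := hQ.1.2 c
    have hcard : 1 < B'.card := by rw [hQ.2 B' hB']; norm_num
    obtain ⟨d, hdB', hdc⟩ := Finset.exists_mem_ne hcard c
    have hcnB : c ∉ B := by
      rw [hBab]
      simp only [Finset.mem_insert, Finset.mem_singleton]
      push_neg
      exact ⟨ne_of_gt hac, ne_of_lt hcb⟩
    rcases lt_trichotomy d a with hda | rfl | had
    · have hsab : SameBlock Q d a :=
        hnc d a c b hda hac hcb ⟨B', hB', hdB', hcB'⟩ ⟨B, hB, ha, hb⟩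
      obtain ⟨B₀, hB₀, hd₀, ha₀⟩ := hsab
      have e1 : B₀ = B' := blocks_eq hQ.1 hB₀ hB' hd₀ hdB'
      have e2 : B₀ = B := blocks_eq hQ.1 hB₀ hB ha₀ ha
      exact hcnB (by rw [← e2, e1]; exact hcB')
    · exact hcnB ((blocks_eq hQ.1 hB' hB hdB' ha) ▸ hcB')
    · rcases lt_trichotomy d b with hdb | rfl | hbd
      · rcases lt_or_gt_of_ne hdc with h1 | h1
        · exact hno ⟨B', hB', d, hdB', c, hcB', had, h1, hcb⟩
        · exact hno ⟨B', hB', c, hcB', d, hdB', hac, h1, hdb⟩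
      · exact hcnB ((blocks_eq hQ.1 hB' hB hdB' hb) ▸ hcB')
      · have hsac : SameBlock Q a c :=
          hnc a c b d hac hcb hbd ⟨B, hB, ha, hb⟩ ⟨B', hB', hcB', hdB'⟩
        obtain ⟨B₀, hB₀, ha₀, hc₀⟩ := hsac
        exact hcnB ((blocks_eq hQ.1 hB₀ hB ha₀ ha) ▸ hc₀)
  -- Step 2: a.val is odd
  have hodd : a.val % 2 = 1 := by
    have h4p : 4 ≤ 4 * p := by omega
    set r := a.val % (4*p) with hr
    have hrlt : r < 4*p := Nat.mod_lt _ (by omega)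
    have hr2 : r % 2 = a.val % 2 := Nat.mod_mod_of_dvd _ ⟨2*p, by ring⟩
    have hrs : b.val % (4*p) = (r + 1) % (4*p) := by
      rw [hb1, Nat.add_mod, Nat.mod_eq_of_lt (show 1 < 4*p by omega)]
    rcases hadapted B hB a ha b hb hab.ne with h1 | h2 | h3
    · -- a + b ≡ 1 mod 4p
      simp only [val1] at h1
      have h1' : ((2 * a.val + 3 : ℕ) : ZMod (4*p)) = ((1 : ℕ) : ZMod (4*p)) := by
        push_cast
        push_cast at h1
        rw [hb1] at h1
        push_cast at h1
        linear_combination h1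
      have hmod : (1 : ℕ) ≡ 2 * a.val + 3 [MOD 4*p] :=
        ((ZMod.natCast_eq_natCast_iff _ _ _).mp h1').symm
      obtain ⟨c, hc⟩ := (Nat.modEq_iff_dvd' (by omega)).mp hmod
      have hc' : 2 * a.val + 2 = 4 * (p * c) := by
        have : 2 * a.val + 3 - 1 = 4 * p * c := hc
        have h2 : 2 * a.val + 2 = 4 * p * c := by omega
        rw [h2]; ring
      set m := p * c with hm
      omega
    · obtain ⟨i, hi1, hi2, hcase⟩ := h2
      simp only [res, ← hr] at hcase
      rcases hcase with ⟨hra, -⟩ | ⟨hra, hrb⟩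
      · omega
      · exfalso
        rw [hrs] at hrb
        rw [Nat.mod_eq_of_lt (show r + 1 < 4*p by omega)] at hrb
        omega
    · obtain ⟨i, hi1, hi2, hcase⟩ := h3
      simp only [res, ← hr] at hcase
      rcases hcase with ⟨hra, -⟩ | ⟨hra, hrb⟩
      · omega
      · exfalso
        rw [hrs] at hrb
        rw [Nat.mod_eq_of_lt (show r + 1 < 4*p by omega)] at hrb
        omega
  -- Step 3: counting
  set S : Finset (Fin (4*p*k)) := Finset.Iio a with hS
  have hScard : S.card = a.val := by rw [hS, Fin.card_Iio]
  have hub := hQ.1.2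
  set f : Fin (4*p*k) → Finset (Fin (4*p*k)) := fun x => (hub x).choose with hf
  have hf1 : ∀ x, f x ∈ Q ∧ x ∈ f x := fun x => (hub x).choose_spec.1
  have hf2 : ∀ (x : Fin (4*p*k)) (C : Finset (Fin (4*p*k))), C ∈ Q → x ∈ C → f x = C :=
    fun x C hC hx => blocks_eq hQ.1 (hf1 x).1 hC (hf1 x).2 hx
  have hsum : S.card = ∑ C ∈ Q, (S.filter (fun x => f x = C)).card :=
    Finset.card_eq_sum_card_fiberwise (fun x _ => (hf1 x).1)
  have hfiber : ∀ C ∈ Q, S.filter (fun x => f x = C) = S ∩ C := by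
    intro C hC
    ext x
    simp only [Finset.mem_filter, Finset.mem_inter]
    constructor
    · rintro ⟨hx, rfl⟩; exact ⟨hx, (hf1 x).2⟩
    · rintro ⟨hx, hxC⟩; exact ⟨hx, hf2 x C hC hxC⟩
  have hsum' : a.val = ∑ C ∈ Q, (S ∩ C).card := by
    rw [← hScard, hsum]
    exact Finset.sum_congr rfl fun C hC => by rw [hfiber C hC]
  have hcle : ∀ C ∈ Q, (S ∩ C).card ≤ 2 := fun C hC =>
    le_trans (Finset.card_le_card Finset.inter_subset_right) (hQ.2 C hC).le
  -- The enclosing pairs are exactly the blocks with exactly one element below a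
  have hFeq : Q.filter (fun B'' =>
        (∃ a'' ∈ B'', a'' < a) ∧ (∃ b'' ∈ B'', b < b''))
      = Q.filter (fun C => (S ∩ C).card = 1) := by
    apply Finset.filter_congr
    intro C hC
    constructor
    · rintro ⟨⟨x, hxC, hxa⟩, ⟨y, hyC, hby⟩⟩
      have hxy : x ≠ y := by
        intro h; subst h
        exact absurd (hxa.trans (hab.trans hby)) (lt_irrefl _)
      have hCeq := pp_block_eq hQ hC hxC hyC hxy
      have hySne : y ∉ S := by
        rw [hS, Finset.mem_Iio]
        exact not_lt.mpr (le_of_lt (hab.trans hby))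
      have : S ∩ C = {x} := by
        ext z
        simp only [Finset.mem_inter, Finset.mem_singleton, hCeq, Finset.mem_insert]
        constructor
        · rintro ⟨hz, rfl | rfl⟩
          · rfl
          · exact absurd hz hySne
        · rintro rfl
          exact ⟨by rw [hS, Finset.mem_Iio]; exact hxa, Or.inl rfl⟩
      rw [this, Finset.card_singleton]
    · intro h1
      obtain ⟨x, y, hxy, hCxy⟩ := Finset.card_eq_two.mp (hQ.2 C hC)
      have hxC : x ∈ C := by rw [hCxy]; simp
      have hyC : y ∈ C := by rw [hCxy]; simp
      -- C ≠ B
      have hCneB : C ≠ B := by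
        intro h
        rw [h, hBab] at h1
        have : S ∩ ({a, b} : Finset (Fin (4*p*k))) = ∅ := by
          ext z
          simp only [Finset.mem_inter, Finset.mem_insert, Finset.mem_singleton,
            Finset.notMem_empty, iff_false, hS, Finset.mem_Iio]
          rintro ⟨hz, rfl | rfl⟩
          · exact lt_irrefl _ hz
          · exact lt_irrefl _ (hz.trans hab)
        rw [this] at h1
        simp at h1
      have key : ∀ u v : Fin (4*p*k), C = {u, v} → u ∈ S → v ∉ S →
          (∃ a'' ∈ C, a'' < a) ∧ (∃ b'' ∈ C, b < b'') := by
        intro u v hCuv huS hvS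
        have huv : u ≠ v := fun h => hvS (h ▸ huS)
        have hua : u < a := by rwa [hS, Finset.mem_Iio] at huS
        have hva : ¬ v < a := by rwa [hS, Finset.mem_Iio] at hvS
        have hvne_a : v ≠ a := by
          rintro rfl
          exact hCneB (blocks_eq hQ.1 hC hB (by rw [hCuv]; simp) ha)
        have hvne_b : v ≠ b := by
          rintro rfl
          exact hCneB (blocks_eq hQ.1 hC hB (by rw [hCuv]; simp) hb)
        have hbv : b < v := by
          rw [Fin.lt_def]
          have h1 : a.val ≤ v.val := by
            have h := hva; rw [Fin.lt_def] at h; omega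
          have h2 : v.val ≠ a.val := fun h => hvne_a (Fin.ext h)
          have h3 : v.val ≠ b.val := fun h => hvne_b (Fin.ext h)
          omega
        exact ⟨⟨u, by rw [hCuv]; simp, hua⟩, ⟨v, by rw [hCuv]; simp, hbv⟩⟩
      by_cases hx : x ∈ S <;> by_cases hy : y ∈ S
      · exfalso
        have : 1 < (S ∩ C).card :=
          Finset.one_lt_card.mpr ⟨x, Finset.mem_inter.mpr ⟨hx, hxC⟩,
            y, Finset.mem_inter.mpr ⟨hy, hyC⟩, hxy⟩
        omega
      · exact key x y hCxy hx hy
      · exact key y x (by rw [hCxy]; exact Finset.pair_comm x y) hy hx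
      · exfalso
        have : S ∩ C = ∅ := by
          ext z
          simp only [Finset.mem_inter, Finset.notMem_empty, iff_false, hCxy,
            Finset.mem_insert, Finset.mem_singleton]
          rintro ⟨hz, rfl | rfl⟩
          · exact hx hz
          · exact hy hz
        rw [this] at h1
        simp at h1
  rw [hFeq]
  -- parity bookkeeping
  have hsplit := Finset.sum_filter_add_sum_filter_not Q
    (fun C => (S ∩ C).card = 1) (fun C => (S ∩ C).card)
  have h1card : ∑ C ∈ Q.filter (fun C => (S ∩ C).card = 1), (S ∩ C).card
      = (Q.filter (fun C => (S ∩ C).card = 1)).card := by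
    rw [Finset.card_eq_sum_ones]
    exact Finset.sum_congr rfl fun C hC => (Finset.mem_filter.mp hC).2
  have h2even : Even (∑ C ∈ Q.filter (fun C => ¬ (S ∩ C).card = 1), (S ∩ C).card) := by
    apply Finset.even_sum
    intro C hC
    have hCQ := Finset.mem_filter.mp hC
    have := hcle C hCQ.1
    have := hCQ.2
    rw [Nat.even_iff]
    omega
  obtain ⟨t, ht⟩ := h2even
  rw [Nat.even_iff]
  rw [h1card, ht] at hsplit
  omega
end
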